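/- arXiv:1905.12355 — 3 statements merged into one kernel-verified Lean document; each statement's English description precedes it below -/
import Mathlib

section
/- Let c ≥ 0 and let B have the Luria–Delbrück distribution with parameter c. Then lim_{m→∞} m·P[B ≥ m] = c. -/
open MeasureTheory ProbabilityTheory Filter Set
open scoped ENNReal
set_option maxHeartbeats 1000000

/-- The step distribution of the Luria–Delbrück distribution:
`P[Y = j] = 1/(j(j+1))` for integers `j ≥ 1`, and `P[Y = 0] = 0`. -/
noncomputable def stepPMF (j : ℕ) : ℝ :=
  if 1 ≤ j then 1 / ((j : ℝ) * ((j : ℝ) + 1)) else 0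

lemma LD_step_hasSum (j : ℕ) (hj : 1 ≤ j) :
    HasSum (fun i : ℕ => stepPMF (j + i)) (1 / (j : ℝ)) := by
  have key : ∀ i : ℕ, stepPMF (j + i) = 1 / ((j + i : ℕ) : ℝ) - 1 / (((j + i : ℕ) : ℝ) + 1) := by
    intro i
    have h1 : (1 : ℕ) ≤ j + i := le_trans hj (Nat.le_add_right _ _)
    have hpos : (0 : ℝ) < ((j + i : ℕ) : ℝ) := by exact_mod_cast h1
    simp only [stepPMF, if_pos h1]
    rw [div_sub_div _ _ (ne_of_gt hpos) (by positivity)]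
    congr 1
    ring
  have hnn : ∀ i, 0 ≤ stepPMF (j + i) := by
    intro i
    rw [key i]
    have hpos : (0 : ℝ) < ((j + i : ℕ) : ℝ) := by positivity
    rw [sub_nonneg]
    gcongr
    linarith
  rw [hasSum_iff_tendsto_nat_of_nonneg hnn]
  have hsum : ∀ N : ℕ, ∑ i ∈ Finset.range N, stepPMF (j + i)
      = 1 / (j : ℝ) - 1 / ((j : ℝ) + N) := by
    intro N
    have := Finset.sum_range_sub' (fun i : ℕ => 1 / ((j : ℝ) + i)) N
    simp only [Nat.cast_zero, add_zero] at this
    rw [← this]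
    refine Finset.sum_congr rfl fun i _ => ?_
    rw [key i]
    push_cast
    ring
  simp only [hsum]
  have : Tendsto (fun N : ℕ => 1 / ((j : ℝ) + N)) atTop (nhds 0) := by
    have h0 : Tendsto (fun N : ℕ => ((j : ℝ) + N)) atTop atTop :=
      tendsto_atTop_add_const_left _ _ tendsto_natCast_atTop_atTop
    simpa only [one_div, Pi.inv_def] using h0.inv_tendsto_atTop
  have h2 := (tendsto_const_nhds (x := 1 / (j:ℝ)) (f := atTop)).sub this
  simpa using h2

lemma nat_sq_le_four_pow (n : ℕ) : ((n : ℝ))^2 ≤ 4 ^ n := by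
  induction n with
  | zero => norm_num
  | succ n ih =>
    have h4 : ((n:ℝ)+1)^2 ≤ 4 * max 1 ((n:ℝ)^2) := by
      rcases le_or_gt (n:ℝ) 1 with h | h
      · have : ((n:ℝ)+1)^2 ≤ 4 := by nlinarith
        calc ((n:ℝ)+1)^2 ≤ 4 := this
          _ ≤ 4 * max 1 ((n:ℝ)^2) := by nlinarith [le_max_left 1 ((n:ℝ)^2)]
      · have : ((n:ℝ)+1)^2 ≤ 4 * (n:ℝ)^2 := by nlinarith
        calc ((n:ℝ)+1)^2 ≤ 4 * (n:ℝ)^2 := this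
          _ ≤ 4 * max 1 ((n:ℝ)^2) := by nlinarith [le_max_right 1 ((n:ℝ)^2)]
    have hmax : max 1 ((n:ℝ)^2) ≤ 4 ^ n := by
      rcases max_cases 1 ((n:ℝ)^2) with ⟨h, _⟩ | ⟨h, _⟩
      · rw [h]; exact one_le_pow₀ (by norm_num)
      · rw [h]; exact ih
    push_cast
    calc ((n:ℝ)+1)^2 ≤ 4 * max 1 ((n:ℝ)^2) := h4
      _ ≤ 4 * 4 ^ n := by linarith
      _ = 4 ^ (n+1) := by ring

lemma LD_summable_sq (c : ℝ) (hc : 0 ≤ c) :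
    Summable (fun n : ℕ => Real.exp (-c) * c ^ n / n.factorial * (n:ℝ)^2) := by
  have h := (Real.summable_pow_div_factorial (4 * c)).mul_left (Real.exp (-c))
  refine Summable.of_nonneg_of_le (fun n => by positivity) (fun n => ?_) h
  have h1 : c ^ n * (n:ℝ)^2 ≤ (4*c)^n := by
    rw [mul_pow]
    rw [mul_comm]
    gcongr
    exact nat_sq_le_four_pow n
  have hfac : (0:ℝ) < n.factorial := by exact_mod_cast n.factorial_pos
  rw [div_mul_eq_mul_div, mul_assoc]
  rw [div_le_iff₀ hfac] at *
  calc Real.exp (-c) * (c ^ n * (n:ℝ)^2) ≤ Real.exp (-c) * (4*c)^n := by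
        have := Real.exp_pos (-c)
        nlinarith
    _ = Real.exp (-c) * ((4*c)^n / n.factorial) * n.factorial := by
        field_simp
  

lemma LD_summable_mean (c : ℝ) (hc : 0 ≤ c) :
    Summable (fun n : ℕ => Real.exp (-c) * c ^ n / n.factorial * (n:ℝ)) := by
  refine Summable.of_nonneg_of_le (fun n => by positivity) (fun n => ?_) (LD_summable_sq c hc)
  have hn : (n:ℝ) ≤ (n:ℝ)^2 := by
    rcases Nat.eq_zero_or_pos n with rfl | hpos
    · norm_num
    · have h1 : (1:ℝ) ≤ n := by exact_mod_cast hpos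
      nlinarith
  gcongr

lemma LD_exp_tsum (c : ℝ) : ∑' n : ℕ, c ^ n / (n.factorial : ℝ) = Real.exp c := by
  rw [Real.exp_eq_exp_ℝ, NormedSpace.exp_eq_tsum_div]

lemma LD_tsum_mean (c : ℝ) (hc : 0 ≤ c) :
    ∑' n : ℕ, Real.exp (-c) * c ^ n / n.factorial * (n:ℝ) = c := by
  rw [Summable.tsum_eq_zero_add (LD_summable_mean c hc)]
  have key : ∀ n : ℕ, Real.exp (-c) * c ^ (n+1) / (n+1).factorial * ((n+1:ℕ):ℝ)
      = (Real.exp (-c) * c) * (c ^ n / n.factorial) := by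
    intro n
    have h1 : ((n+1).factorial : ℝ) = (n+1) * n.factorial := by
      rw [Nat.factorial_succ]; push_cast; ring
    have h2 : (0:ℝ) < n.factorial := by exact_mod_cast n.factorial_pos
    rw [h1]
    field_simp
    push_cast
    ring
  simp only [key]
  rw [tsum_mul_left, LD_exp_tsum]
  have : Real.exp (-c) * Real.exp c = 1 := by rw [← Real.exp_add]; simp
  push_cast
  nlinarith [this]

lemma LD_one_sub_pow (n : ℕ) (x : ℝ) (h0 : 0 ≤ x) (h1 : x ≤ 1) :
    (1 - x)^n ≤ 1 - n*x + (n:ℝ)^2 * x^2 := by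
  induction n with
  | zero => norm_num
  | succ n ih =>
    have hx : 0 ≤ 1 - x := by linarith
    have step : (1-x)^(n+1) = (1-x)^n * (1-x) := by ring
    rw [step]
    have h2 : (1-x)^n * (1-x) ≤ (1 - n*x + (n:ℝ)^2*x^2) * (1-x) := by
      apply mul_le_mul_of_nonneg_right ih hx
    push_cast
    nlinarith [sq_nonneg x, sq_nonneg ((n:ℝ)*x), mul_nonneg (mul_nonneg (sq_nonneg (n:ℝ)) h0) h0]

/-- Let `c ≥ 0` and let `B = Σ_{k=1}^K Y_k` have the Luria–Delbrück
distribution with parameter `c`, where `K` is Poisson(`c`), the `Y k` are i.i.d. with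
`P[Y = j] = 1/(j(j+1))` for `j ≥ 1`, and `K, Y_1, Y_2, …` are independent.  Then
`lim_{m→∞} m · P[B ≥ m] = c`. -/
theorem luria_delbruck_tail
    (c : ℝ) (hc : 0 ≤ c)
    (Ω : Type) [MeasurableSpace Ω] (P : Measure Ω) [IsProbabilityMeasure P]
    (K : Ω → ℕ) (Y : ℕ → Ω → ℕ) (B : Ω → ℕ)
    (hKmeas : Measurable K) (hYmeas : ∀ k, Measurable (Y k))
    (hKlaw : ∀ m : ℕ,
      P {ω | K ω = m} = ENNReal.ofReal (Real.exp (-c) * c ^ m / m.factorial))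
    (hYlaw : ∀ k j, P {ω | Y k ω = j} = ENNReal.ofReal (stepPMF j))
    (hIndep : iIndepFun
      (fun i : Option ℕ => Option.elim i K Y) P)
    (hB : ∀ ω, B ω = ∑ k ∈ Finset.range (K ω), Y k ω) :
    Filter.Tendsto (fun m : ℕ => (m : ℝ) * (P {ω | m ≤ B ω}).toReal)
      Filter.atTop (nhds c) := by
  classical
  set f : Option ℕ → Ω → ℕ := fun i => Option.elim i K Y with hfdef
  set S : ℕ → Ω → ℕ := fun n ω => ∑ k ∈ Finset.range n, Y k ω with hSdef
  have hSmeas : ∀ n, Measurable (S n) :=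
    fun n => Finset.measurable_sum _ (fun k _ => hYmeas k)
  have hmeasf : ∀ i, Measurable (f i) := by rintro (_ | k); exacts [hKmeas, hYmeas k]
  -- tail of Y
  have hYtail : ∀ k j, 1 ≤ j → P {ω | j ≤ Y k ω} = ENNReal.ofReal (1 / (j : ℝ)) := by
    intro k j hj
    have hset : {ω | j ≤ Y k ω} = ⋃ i : ℕ, {ω | Y k ω = j + i} := by
      ext ω
      simp only [Set.mem_setOf_eq, Set.mem_iUnion]
      constructor
      · intro h; exact ⟨Y k ω - j, by omega⟩
      · rintro ⟨i, hi⟩; omega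
    have hdisj : Pairwise (Function.onFun Disjoint fun i : ℕ => {ω | Y k ω = j + i}) := by
      intro i i' hne
      simp only [Function.onFun, Set.disjoint_left]
      intro ω h1 h2
      simp only [Set.mem_setOf_eq] at h1 h2
      omega
    have hmeas : ∀ i : ℕ, MeasurableSet {ω | Y k ω = j + i} := by
      intro i
      exact hYmeas k (measurableSet_singleton (j + i))
    rw [hset, measure_iUnion hdisj hmeas]
    have hs := LD_step_hasSum j hj
    have hnn : ∀ i, 0 ≤ stepPMF (j + i) := by
      intro i
      unfold stepPMF
      split <;> positivity
    calc ∑' i : ℕ, P {ω | Y k ω = j + i}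
        = ∑' i : ℕ, ENNReal.ofReal (stepPMF (j + i)) := by
          exact tsum_congr fun i => hYlaw k (j + i)
      _ = ENNReal.ofReal (∑' i, stepPMF (j + i)) :=
          (ENNReal.ofReal_tsum_of_nonneg hnn hs.summable).symm
      _ = ENNReal.ofReal (1 / (j : ℝ)) := by rw [hs.tsum_eq]
  -- strict tail of Y
  have hYlt : ∀ k m, 1 ≤ m →
      P {ω | Y k ω < m} = ENNReal.ofReal (1 - 1 / (m : ℝ)) := by
    intro k m hm
    have hc2 : {ω | Y k ω < m} = {ω | m ≤ Y k ω}ᶜ := by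
      ext ω; simp only [Set.mem_setOf_eq, Set.mem_compl_iff, not_le]
    have hmeas : MeasurableSet {ω | m ≤ Y k ω} := by
      exact hYmeas k (Set.to_countable _).measurableSet
    rw [hc2, prob_compl_eq_one_sub hmeas, hYtail k m hm,
      ENNReal.ofReal_sub _ (by positivity), ENNReal.ofReal_one]
  -- independence of S n and K
  have hKS : ∀ n : ℕ, IndepFun (S n) K P := by
    intro n
    have h := hIndep.indepFun_finsetSum_of_notMem hmeasf
      (s := (Finset.range n).image some) (i := none) (by simp)
    have hsum : (∑ j ∈ (Finset.range n).image some, f j) = S n := by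
      funext ω
      rw [Finset.sum_apply]
      rw [Finset.sum_image (by intro a _ b _ h; exact Option.some_injective _ h)]
      rfl
    rwa [hsum] at h
  -- pairwise independence of the Y's
  have hpair : ∀ k l, k ≠ l → IndepFun (Y k) (Y l) P := by
    intro k l h
    exact hIndep.indepFun (i := some k) (j := some l) (by simpa)
  -- product formula for the Y's
  have hprodY : ∀ n m₀, P (⋂ k ∈ Finset.range n, {ω | Y k ω < m₀})
      = ∏ k ∈ Finset.range n, P {ω | Y k ω < m₀} := by
    intro n m₀
    have h := hIndep.measure_inter_preimage_eq_mul ((Finset.range n).image some)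
      (sets := fun _ => {y | y < m₀}) (fun i _ => (Set.to_countable _).measurableSet)
    have h1 : (⋂ i ∈ (Finset.range n).image some, f i ⁻¹' {y | y < m₀})
        = ⋂ k ∈ Finset.range n, {ω | Y k ω < m₀} := by
      rw [Finset.set_biInter_finset_image]
      rfl
    have h2 : (∏ i ∈ (Finset.range n).image some, P (f i ⁻¹' {y | y < m₀}))
        = ∏ k ∈ Finset.range n, P {ω | Y k ω < m₀} := by
      rw [Finset.prod_image (by intro a _ b _ h; exact Option.some_injective _ h)]
      rfl
    rw [h1, h2] at h
    exact h
  -- decomposition of the tail of B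
  have hdecompB : ∀ m : ℕ, P {ω | m ≤ B ω}
      = ∑' n : ℕ, P {ω | m ≤ S n ω} * P {ω | K ω = n} := by
    intro m
    have hset : {ω | m ≤ B ω} = ⋃ n : ℕ, ({ω | K ω = n} ∩ {ω | m ≤ S n ω}) := by
      ext ω
      simp only [Set.mem_setOf_eq, Set.mem_iUnion, Set.mem_inter_iff]
      constructor
      · intro h
        refine ⟨K ω, rfl, ?_⟩
        show m ≤ ∑ k ∈ Finset.range (K ω), Y k ω
        rw [← hB ω]; exact h
      · rintro ⟨n, rfl, h⟩
        rw [hB ω]; exact h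
    have hdisj : Pairwise (Function.onFun Disjoint
        fun n : ℕ => ({ω | K ω = n} ∩ {ω | m ≤ S n ω})) := by
      intro i i' hne
      simp only [Function.onFun, Set.disjoint_left]
      rintro ω ⟨h1, _⟩ ⟨h2, _⟩
      simp only [Set.mem_setOf_eq] at h1 h2
      omega
    have hmeas : ∀ n : ℕ, MeasurableSet ({ω | K ω = n} ∩ {ω | m ≤ S n ω}) := by
      intro n
      exact (hKmeas (measurableSet_singleton n)).inter
        ((hSmeas n) (Set.to_countable _).measurableSet)
    rw [hset, measure_iUnion hdisj hmeas]
    refine tsum_congr fun n => ?_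
    rw [Set.inter_comm]
    exact (hKS n).measure_inter_preimage_eq_mul _ _
      (Set.to_countable {j | m ≤ j}).measurableSet
      (measurableSet_singleton n)
  -- notation
  set t : ℕ → ℕ → ℝ := fun n m => (P {ω | m ≤ S n ω}).toReal with htdef
  have htnn : ∀ n m, 0 ≤ t n m := fun n m => ENNReal.toReal_nonneg
  -- q-values
  have hq : ∀ n m : ℕ, 1 ≤ n → 1 ≤ m → ∃ q : ℕ, 1 ≤ q ∧ m ≤ n * q ∧
      (∀ y : ℕ, m ≤ n * y ↔ q ≤ y) := by
    intro n m hn hm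
    refine ⟨(m-1)/n + 1, le_add_self, ?_, ?_⟩
    · have h2 : m - 1 < ((m-1)/n + 1) * n :=
        (Nat.div_lt_iff_lt_mul (show 0 < n by omega)).mp (Nat.lt_succ_self _)
      have h3 : m - 1 + 1 ≤ ((m-1)/n + 1) * n := h2
      have h4 : m - 1 + 1 = m := by omega
      rw [h4] at h3
      calc m ≤ ((m-1)/n + 1) * n := h3
        _ = n * ((m-1)/n + 1) := by ring
    · intro y
      constructor
      · intro h
        have : (m-1)/n < y := by
          rw [Nat.div_lt_iff_lt_mul (show 0 < n by omega)]
          calc m - 1 < m := by omega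
            _ ≤ n * y := h
            _ = y * n := by ring
        omega
      · intro h
        have : (m-1)/n < y := by omega
        rw [Nat.div_lt_iff_lt_mul (show 0 < n by omega)] at this
        calc m = (m-1)+1 := by omega
          _ ≤ y * n := this
          _ = n * y := by ring
  -- single Y below sum
  have hYleS : ∀ n k (ω : Ω), k ∈ Finset.range n → Y k ω ≤ S n ω := by
    intro n k ω hk
    show Y k ω ≤ ∑ i ∈ Finset.range n, Y i ω
    exact Finset.single_le_sum (f := fun i => Y i ω) (fun i _ => Nat.zero_le _) hk
  -- empty for n = 0
  have ht0 : ∀ m, 1 ≤ m → t 0 m = 0 := by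
    intro m hm
    have : {ω | m ≤ S 0 ω} = (∅ : Set Ω) := by
      ext ω
      simp only [hSdef, Finset.range_zero, Finset.sum_empty, Set.mem_setOf_eq,
        Set.mem_empty_iff_false, iff_false]
      omega
    simp [htdef, this]
  -- crude bound
  have hcrude : ∀ n m : ℕ, 1 ≤ m → (m:ℝ) * t n m ≤ (n:ℝ)^2 := by
    intro n m hm
    rcases Nat.eq_zero_or_pos n with rfl | hn
    · rw [ht0 m hm]; simp
    obtain ⟨q, hq1, hmnq, hiff⟩ := hq n m hn hm
    have hsub : {ω | m ≤ S n ω} ⊆ ⋃ k ∈ Finset.range n, {ω | q ≤ Y k ω} := by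
      intro ω h
      simp only [Set.mem_setOf_eq] at h
      by_contra hcon
      simp only [Set.mem_iUnion, Set.mem_setOf_eq, not_exists, not_le] at hcon
      have hub : ∀ k ∈ Finset.range n, Y k ω ≤ (m-1)/n := by
        intro k hk
        have hYlt : Y k ω < q := hcon k hk
        have h2 : ¬ (m ≤ n * Y k ω) := fun hcontra => by
          rw [hiff] at hcontra; omega
        push_neg at h2
        rw [Nat.le_div_iff_mul_le (show 0 < n by omega)]
        calc Y k ω * n = n * Y k ω := by ring
          _ ≤ m - 1 := by omega
      have hsum : S n ω ≤ n * ((m-1)/n) := by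
        calc S n ω ≤ ∑ _k ∈ Finset.range n, (m-1)/n := Finset.sum_le_sum hub
          _ = n * ((m-1)/n) := by rw [Finset.sum_const, Finset.card_range]; ring
      have := Nat.mul_div_le (m-1) n
      have h3 : n * ((m-1)/n) ≤ m - 1 := by
        calc n * ((m-1)/n) = (m-1)/n * n := by ring
          _ ≤ m - 1 := Nat.div_mul_le_self _ _
      omega
    have hP : P {ω | m ≤ S n ω} ≤ ENNReal.ofReal ((n:ℝ) * (1/q)) := by
      calc P {ω | m ≤ S n ω} ≤ P (⋃ k ∈ Finset.range n, {ω | q ≤ Y k ω}) :=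
            measure_mono hsub
        _ ≤ ∑ k ∈ Finset.range n, P {ω | q ≤ Y k ω} := measure_biUnion_finset_le _ _
        _ = ∑ k ∈ Finset.range n, ENNReal.ofReal (1/(q:ℝ)) :=
            Finset.sum_congr rfl fun k _ => hYtail k q hq1
        _ = (n : ℝ≥0∞) * ENNReal.ofReal (1/(q:ℝ)) := by
            rw [Finset.sum_const, Finset.card_range, nsmul_eq_mul]
        _ = ENNReal.ofReal ((n:ℝ) * (1/q)) := by
            rw [ENNReal.ofReal_mul (by positivity), ENNReal.ofReal_natCast]
    have ht' : t n m ≤ (n:ℝ) * (1/q) :=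
      ENNReal.toReal_le_of_le_ofReal (by positivity) hP
    have hqpos : (0:ℝ) < q := by exact_mod_cast hq1
    have hmnq' : (m:ℝ) ≤ n * q := by exact_mod_cast hmnq
    calc (m:ℝ) * t n m ≤ (m:ℝ) * ((n:ℝ) * (1/q)) := by
          apply mul_le_mul_of_nonneg_left ht' (by positivity)
      _ ≤ (n:ℝ)^2 := by
          rw [mul_comm ((n:ℝ)) (1/(q:ℝ)), ← mul_assoc, mul_one_div, div_mul_eq_mul_div,
            div_le_iff₀ hqpos]
          nlinarith [Nat.cast_nonneg (α := ℝ) n]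
  -- lower bound
  have hlow : ∀ n m : ℕ, 1 ≤ m → 1 - (1 - 1/(m:ℝ))^n ≤ t n m := by
    intro n m hm
    have hm1 : (0:ℝ) < m := by exact_mod_cast hm
    have hx0 : 0 ≤ 1 - 1/(m:ℝ) := by
      rw [sub_nonneg]
      rw [div_le_one hm1]
      exact_mod_cast hm
    have hx1 : (1 - 1/(m:ℝ)) ≤ 1 := by
      have : 0 ≤ 1/(m:ℝ) := by positivity
      linarith
    set A := ⋃ k ∈ Finset.range n, {ω | m ≤ Y k ω} with hA
    have hsub : A ⊆ {ω | m ≤ S n ω} := by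
      intro ω hω
      simp only [hA, Set.mem_iUnion, Set.mem_setOf_eq] at hω
      obtain ⟨k, hk, hky⟩ := hω
      exact Set.mem_setOf_eq ▸ le_trans hky (hYleS n k ω hk)
    have hIc : (⋂ k ∈ Finset.range n, {ω | Y k ω < m})ᶜ = A := by
      rw [hA, Set.compl_iInter₂]
      refine Set.iUnion₂_congr fun k hk => ?_
      ext ω; simp [not_lt]
    have hImeas : MeasurableSet (⋂ k ∈ Finset.range n, {ω | Y k ω < m}) := by
      exact MeasurableSet.biInter (Set.to_countable _)
        (fun k _ => (hYmeas k) (Set.to_countable {y | y < m}).measurableSet)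
    have hPA : P A = 1 - ENNReal.ofReal ((1 - 1/(m:ℝ))^n) := by
      rw [← hIc, prob_compl_eq_one_sub hImeas, hprodY n m]
      congr 1
      calc ∏ k ∈ Finset.range n, P {ω | Y k ω < m}
          = ∏ k ∈ Finset.range n, ENNReal.ofReal (1 - 1/(m:ℝ)) :=
            Finset.prod_congr rfl fun k _ => hYlt k m hm
        _ = ENNReal.ofReal (1 - 1/(m:ℝ)) ^ n := by
            rw [Finset.prod_const, Finset.card_range]
        _ = ENNReal.ofReal ((1 - 1/(m:ℝ))^n) := by
            rw [ENNReal.ofReal_pow hx0]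
    have hple : (1:ℝ≥0∞) - ENNReal.ofReal ((1 - 1/(m:ℝ))^n)
        = ENNReal.ofReal (1 - (1 - 1/(m:ℝ))^n) := by
      rw [ENNReal.ofReal_sub _ (by positivity), ENNReal.ofReal_one]
    have : ENNReal.ofReal (1 - (1 - 1/(m:ℝ))^n) ≤ P {ω | m ≤ S n ω} := by
      rw [← hple, ← hPA]
      exact measure_mono hsub
    rw [ENNReal.ofReal_le_iff_le_toReal (measure_ne_top P _)] at this
    exact this
  -- fine upper bound
  have hfine : ∀ n b m : ℕ, 1 ≤ n → 1 ≤ b → n*b < m →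
      (m:ℝ) * t n m ≤ (n:ℝ) * ((m:ℝ)/((m - (n-1)*b : ℕ):ℝ)) + (n:ℝ)^3/(b:ℝ) := by
    intro n b m hn hb hm
    have hnb : (n-1)*b ≤ n*b := Nat.mul_le_mul_right _ (by omega)
    have hnbm : (n-1)*b < m := lt_of_le_of_lt hnb hm
    have hm1 : 1 ≤ m := by
      have : 1 ≤ n * b := Nat.one_le_iff_ne_zero.mpr (by positivity)
      omega
    obtain ⟨q, hq1, hmnq, hiff⟩ := hq n m hn hm1
    set r : ℕ := m - (n-1)*b with hrdef
    have hr1 : 1 ≤ r := by omega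
    have hrcast : (r:ℝ) = (m:ℝ) - ((n-1)*b : ℕ) := by
      rw [hrdef, Nat.cast_sub (le_of_lt hnbm)]
    have hrpos : (0:ℝ) < r := by exact_mod_cast hr1
    set U1 := ⋃ k ∈ Finset.range n, {ω | r ≤ Y k ω} with hU1
    set U2 := ⋃ k ∈ Finset.range n, ⋃ l ∈ (Finset.range n).erase k,
      ({ω | q ≤ Y k ω} ∩ {ω | b ≤ Y l ω}) with hU2
    have hsub : {ω | m ≤ S n ω} ⊆ U1 ∪ U2 := by
      intro ω hω
      simp only [Set.mem_setOf_eq] at hω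
      have hex : ∃ k ∈ Finset.range n, q ≤ Y k ω := by
        by_contra hcon
        push_neg at hcon
        have hub : ∀ k ∈ Finset.range n, Y k ω ≤ (m-1)/n := by
          intro k hk
          have hYlt2 : Y k ω < q := hcon k hk
          have h2 : ¬ (m ≤ n * Y k ω) := fun hcontra => by
            rw [hiff] at hcontra; omega
          push_neg at h2
          rw [Nat.le_div_iff_mul_le (show 0 < n by omega)]
          calc Y k ω * n = n * Y k ω := by ring
            _ ≤ m - 1 := by omega
        have hsum : S n ω ≤ n * ((m-1)/n) := by
          calc S n ω ≤ ∑ _k ∈ Finset.range n, (m-1)/n := Finset.sum_le_sum hub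
            _ = n * ((m-1)/n) := by rw [Finset.sum_const, Finset.card_range]; ring
        have h3 : n * ((m-1)/n) ≤ m - 1 := by
          calc n * ((m-1)/n) = (m-1)/n * n := by ring
            _ ≤ m - 1 := Nat.div_mul_le_self _ _
        omega
      obtain ⟨k, hk, hkq⟩ := hex
      by_cases hbig : ∃ l ∈ (Finset.range n).erase k, b ≤ Y l ω
      · right
        obtain ⟨l, hl, hlb⟩ := hbig
        rw [hU2]
        refine Set.mem_iUnion₂.mpr ⟨k, hk, Set.mem_iUnion₂.mpr ⟨l, hl, ?_⟩⟩
        exact ⟨hkq, hlb⟩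
      · left
        push_neg at hbig
        have hsum2 : ∑ l ∈ (Finset.range n).erase k, Y l ω ≤ (n-1) * (b-1) := by
          calc ∑ l ∈ (Finset.range n).erase k, Y l ω
              ≤ ∑ _l ∈ (Finset.range n).erase k, (b-1) :=
                Finset.sum_le_sum (fun l hl => by have := hbig l hl; omega)
            _ = ((Finset.range n).erase k).card * (b-1) := by
                rw [Finset.sum_const]; ring
            _ = (n-1) * (b-1) := by
                rw [Finset.card_erase_of_mem hk, Finset.card_range]
        have hsplit : S n ω = Y k ω + ∑ l ∈ (Finset.range n).erase k, Y l ω := by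
          rw [hSdef]
          exact (Finset.add_sum_erase _ _ hk).symm
        have hA : (n-1)*(b-1) ≤ (n-1)*b := Nat.mul_le_mul_left _ (by omega)
        have hkey : m ≤ Y k ω + (n-1)*b := by
          calc m ≤ S n ω := hω
            _ = Y k ω + ∑ l ∈ (Finset.range n).erase k, Y l ω := hsplit
            _ ≤ Y k ω + (n-1)*(b-1) := Nat.add_le_add_left hsum2 _
            _ ≤ Y k ω + (n-1)*b := Nat.add_le_add_left hA _
        rw [hU1]
        refine Set.mem_iUnion₂.mpr ⟨k, hk, ?_⟩
        show r ≤ Y k ω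
        omega
    have hPU1 : P U1 ≤ ENNReal.ofReal ((n:ℝ) * (1/r)) := by
      calc P U1 ≤ ∑ k ∈ Finset.range n, P {ω | r ≤ Y k ω} := measure_biUnion_finset_le _ _
        _ = ∑ k ∈ Finset.range n, ENNReal.ofReal (1/(r:ℝ)) :=
            Finset.sum_congr rfl fun k _ => hYtail k r hr1
        _ = (n : ℝ≥0∞) * ENNReal.ofReal (1/(r:ℝ)) := by
            rw [Finset.sum_const, Finset.card_range, nsmul_eq_mul]
        _ = ENNReal.ofReal ((n:ℝ) * (1/r)) := by
            rw [ENNReal.ofReal_mul (by positivity), ENNReal.ofReal_natCast]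
    have hPU2 : P U2 ≤ ENNReal.ofReal ((n:ℝ)^2 * ((1/q) * (1/b))) := by
      have hpairP : ∀ k ∈ Finset.range n, ∀ l ∈ (Finset.range n).erase k,
          P ({ω | q ≤ Y k ω} ∩ {ω | b ≤ Y l ω})
            = ENNReal.ofReal ((1/(q:ℝ)) * (1/(b:ℝ))) := by
        intro k hk l hl
        have hkl : k ≠ l := (Finset.ne_of_mem_erase hl).symm
        have := (hpair k l hkl).measure_inter_preimage_eq_mul _ _
          (Set.to_countable {y | q ≤ y}).measurableSet
          (Set.to_countable {y | b ≤ y}).measurableSet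
        have h2 : P ({ω | q ≤ Y k ω} ∩ {ω | b ≤ Y l ω})
            = P {ω | q ≤ Y k ω} * P {ω | b ≤ Y l ω} := this
        rw [h2, hYtail k q hq1, hYtail l b hb,
          ← ENNReal.ofReal_mul (by positivity)]
      calc P U2 ≤ ∑ k ∈ Finset.range n,
            P (⋃ l ∈ (Finset.range n).erase k, ({ω | q ≤ Y k ω} ∩ {ω | b ≤ Y l ω})) :=
            measure_biUnion_finset_le _ _
        _ ≤ ∑ k ∈ Finset.range n, ∑ l ∈ (Finset.range n).erase k,
            P ({ω | q ≤ Y k ω} ∩ {ω | b ≤ Y l ω}) :=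
            Finset.sum_le_sum (fun k _ => measure_biUnion_finset_le _ _)
        _ = ∑ k ∈ Finset.range n, ∑ _l ∈ (Finset.range n).erase k,
            ENNReal.ofReal ((1/(q:ℝ)) * (1/(b:ℝ))) := by
            refine Finset.sum_congr rfl fun k hk => Finset.sum_congr rfl fun l hl => ?_
            exact hpairP k hk l hl
        _ ≤ ∑ _k ∈ Finset.range n, ∑ _l ∈ Finset.range n,
            ENNReal.ofReal ((1/(q:ℝ)) * (1/(b:ℝ))) := by
            refine Finset.sum_le_sum fun k _ => ?_
            exact Finset.sum_le_sum_of_subset (Finset.erase_subset _ _)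
        _ = ((n : ℝ≥0∞) * (n : ℝ≥0∞)) * ENNReal.ofReal ((1/(q:ℝ)) * (1/(b:ℝ))) := by
            simp [Finset.sum_const, Finset.card_range, nsmul_eq_mul, mul_assoc]
        _ = ENNReal.ofReal ((n:ℝ)^2 * ((1/q) * (1/b))) := by
            rw [← ENNReal.ofReal_natCast n, ← ENNReal.ofReal_mul (by positivity),
              ← ENNReal.ofReal_mul (by positivity)]
            congr 1
            ring
    have hP : P {ω | m ≤ S n ω}
        ≤ ENNReal.ofReal ((n:ℝ) * (1/r) + (n:ℝ)^2 * ((1/q) * (1/b))) := by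
      calc P {ω | m ≤ S n ω} ≤ P (U1 ∪ U2) := measure_mono hsub
        _ ≤ P U1 + P U2 := measure_union_le _ _
        _ ≤ ENNReal.ofReal ((n:ℝ) * (1/r)) + ENNReal.ofReal ((n:ℝ)^2 * ((1/q) * (1/b))) :=
            add_le_add hPU1 hPU2
        _ = ENNReal.ofReal ((n:ℝ) * (1/r) + (n:ℝ)^2 * ((1/q) * (1/b))) := by
            rw [ENNReal.ofReal_add (by positivity) (by positivity)]
    have ht' : t n m ≤ (n:ℝ) * (1/r) + (n:ℝ)^2 * ((1/q) * (1/b)) :=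
      ENNReal.toReal_le_of_le_ofReal (by positivity) hP
    have hqpos : (0:ℝ) < q := by exact_mod_cast hq1
    have hbpos : (0:ℝ) < b := by exact_mod_cast hb
    have hmnq' : (m:ℝ) ≤ n * q := by exact_mod_cast hmnq
    have hmpos : (0:ℝ) ≤ m := Nat.cast_nonneg m
    calc (m:ℝ) * t n m
        ≤ (m:ℝ) * ((n:ℝ) * (1/r) + (n:ℝ)^2 * ((1/q) * (1/b))) :=
          mul_le_mul_of_nonneg_left ht' hmpos
      _ = (n:ℝ) * ((m:ℝ)/(r:ℝ)) + ((m:ℝ)/(q:ℝ)) * ((n:ℝ)^2/b) := by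
          field_simp
      _ ≤ (n:ℝ) * ((m:ℝ)/(r:ℝ)) + (n:ℝ) * ((n:ℝ)^2/b) := by
          have h1 : (m:ℝ)/(q:ℝ) ≤ (n:ℝ) := by
            rw [div_le_iff₀ hqpos]; linarith
          have h2 : (0:ℝ) ≤ (n:ℝ)^2/b := by positivity
          nlinarith
      _ = (n:ℝ) * ((m:ℝ)/((m - (n-1)*b : ℕ):ℝ)) + (n:ℝ)^3/(b:ℝ) := by
          rw [← hrdef]
          ring
  -- the per-n limit
  have hlim : ∀ n : ℕ, Tendsto (fun m : ℕ => (m:ℝ) * t n m) atTop (nhds (n:ℝ)) := by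
    intro n
    rw [tendsto_order]
    constructor
    · intro a ha
      have h0 : Tendsto (fun m : ℕ => (n:ℝ)^2/m) atTop (nhds 0) :=
        tendsto_const_nhds.div_atTop tendsto_natCast_atTop_atTop
      have hbten : Tendsto (fun m : ℕ => (n:ℝ) - (n:ℝ)^2/m) atTop (nhds (n:ℝ)) := by
        simpa using tendsto_const_nhds.sub h0
      filter_upwards [hbten.eventually (eventually_gt_nhds ha), eventually_ge_atTop 1]
        with m h1 h2
      have hm0 : (0:ℝ) < m := by exact_mod_cast h2
      have hx0 : 0 ≤ 1 - 1/(m:ℝ) := by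
        rw [sub_nonneg, div_le_one hm0]
        exact_mod_cast h2
      have hx1 : 1/(m:ℝ) ≤ 1 := by
        rw [div_le_one hm0]; exact_mod_cast h2
      have hpow := LD_one_sub_pow n (1/(m:ℝ)) (by positivity) hx1
      have hlow' := hlow n m h2
      have h3 : (n:ℝ)*(1/m) - (n:ℝ)^2*(1/m)^2 ≤ t n m := by
        nlinarith [hpow, hlow']
      have h4 : (n:ℝ) - (n:ℝ)^2/m = m * ((n:ℝ)*(1/m) - (n:ℝ)^2*(1/m)^2) := by
        field_simp
      have h5 : (n:ℝ) - (n:ℝ)^2/m ≤ (m:ℝ) * t n m := by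
        rw [h4]
        exact mul_le_mul_of_nonneg_left h3 (le_of_lt hm0)
      linarith
    · intro a ha
      rcases Nat.eq_zero_or_pos n with rfl | hn
      · filter_upwards [eventually_ge_atTop 1] with m hm
        rw [ht0 m hm]
        simpa using ha
      · obtain ⟨b, hb1, hble⟩ : ∃ b : ℕ, 1 ≤ b ∧ (n:ℝ)^3/b ≤ (a-(n:ℝ))/2 := by
          refine ⟨max 1 (Nat.ceil ((2*(n:ℝ)^3)/(a - n))), le_max_left _ _, ?_⟩
          have hbpos : (0:ℝ) < (max 1 (Nat.ceil ((2*(n:ℝ)^3)/(a - n))) : ℕ) := by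
            have : (1:ℕ) ≤ max 1 (Nat.ceil ((2*(n:ℝ)^3)/(a - n))) := le_max_left _ _
            exact_mod_cast this
          have han : (0:ℝ) < a - n := by linarith
          rw [div_le_iff₀ hbpos]
          have hbge : (Nat.ceil ((2*(n:ℝ)^3)/(a - n)) : ℕ)
              ≤ max 1 (Nat.ceil ((2*(n:ℝ)^3)/(a - n))) := le_max_right _ _
          have h2 : ((Nat.ceil ((2*(n:ℝ)^3)/(a - n)) : ℕ) : ℝ)
              ≤ ((max 1 (Nat.ceil ((2*(n:ℝ)^3)/(a - n))) : ℕ) : ℝ) := Nat.cast_le.mpr hbge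
          have h1 : (2*(n:ℝ)^3)/(a-n) ≤ ((max 1 (Nat.ceil ((2*(n:ℝ)^3)/(a - n))) : ℕ) : ℝ) :=
            le_trans (Nat.le_ceil _) h2
          rw [div_le_iff₀ han] at h1
          nlinarith
        have hbpos : (0:ℝ) < b := by exact_mod_cast hb1
        have han : (0:ℝ) < a - n := by linarith
        have hden : Tendsto (fun m : ℕ => (m:ℝ) - (((n-1)*b : ℕ):ℝ)) atTop atTop :=
          tendsto_atTop_add_const_right _ (-(((n-1)*b : ℕ):ℝ)) tendsto_natCast_atTop_atTop
        have hfrac : Tendsto (fun m : ℕ => (((n-1)*b : ℕ):ℝ)/((m:ℝ) - (((n-1)*b : ℕ):ℝ)))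
            atTop (nhds 0) :=
          tendsto_const_nhds.div_atTop hden
        have h1p : Tendsto (fun m : ℕ => 1 + (((n-1)*b : ℕ):ℝ)/((m:ℝ) - (((n-1)*b : ℕ):ℝ)))
            atTop (nhds (1 + 0)) :=
          tendsto_const_nhds.add hfrac
        have hmain0 : Tendsto (fun m : ℕ => (m:ℝ)/((m:ℝ) - (((n-1)*b : ℕ):ℝ)))
            atTop (nhds 1) := by
          rw [show (1:ℝ) = 1 + 0 by ring]
          refine h1p.congr' ?_
          filter_upwards [hden.eventually_gt_atTop 0] with m hm
          have hne : (m:ℝ) - (((n-1)*b : ℕ):ℝ) ≠ 0 := ne_of_gt hm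
          show (1:ℝ) + _ = _
          rw [one_add_div hne, sub_add_cancel]
        have hRlim : Tendsto
            (fun m : ℕ => (n:ℝ) * ((m:ℝ)/((m:ℝ) - (((n-1)*b : ℕ):ℝ))) + (n:ℝ)^3/b)
            atTop (nhds ((n:ℝ) * 1 + (n:ℝ)^3/b)) :=
          (hmain0.const_mul _).add tendsto_const_nhds
        have hlt : (n:ℝ) * 1 + (n:ℝ)^3/b < a := by
          have h9 : (a-(n:ℝ))/2 < a - n := by linarith
          linarith
        filter_upwards [hRlim.eventually (eventually_lt_nhds hlt),
          eventually_gt_atTop (n*b)] with m h1 h2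
        have hnb : (n-1)*b ≤ n*b := Nat.mul_le_mul_right _ (by omega)
        have hcast : ((m - (n-1)*b : ℕ):ℝ) = (m:ℝ) - (((n-1)*b : ℕ):ℝ) := by
          rw [Nat.cast_sub (by omega)]
        have h3 := hfine n b m hn hb1 h2
        rw [hcast] at h3
        exact lt_of_le_of_lt h3 h1
  -- assembly
  set π : ℕ → ℝ := fun n => Real.exp (-c) * c ^ n / n.factorial with hπdef
  have hπnn : ∀ n, 0 ≤ π n := fun n => by positivity
  have hmain : ∀ m : ℕ, (m:ℝ) * (P {ω | m ≤ B ω}).toReal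
      = ∑' n : ℕ, π n * ((m:ℝ) * t n m) := by
    intro m
    rw [hdecompB m, ENNReal.tsum_toReal_eq
      (fun n => ENNReal.mul_ne_top (measure_ne_top P _) (measure_ne_top P _))]
    rw [← tsum_mul_left]
    refine tsum_congr fun n => ?_
    rw [ENNReal.toReal_mul, hKlaw n, ENNReal.toReal_ofReal (hπnn n)]
    ring
  have hsummable : Summable (fun n : ℕ => π n * (n:ℝ)^2) := LD_summable_sq c hc
  have hab : ∀ n : ℕ, Tendsto (fun m : ℕ => π n * ((m:ℝ) * t n m)) atTop
      (nhds (π n * n)) := fun n => (hlim n).const_mul (π n)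
  have hbound : ∀ᶠ m : ℕ in atTop, ∀ n : ℕ,
      ‖π n * ((m:ℝ) * t n m)‖ ≤ π n * (n:ℝ)^2 := by
    filter_upwards [eventually_ge_atTop 1] with m hm n
    rw [Real.norm_eq_abs, abs_of_nonneg
      (mul_nonneg (hπnn n) (mul_nonneg (Nat.cast_nonneg m) (htnn n m)))]
    exact mul_le_mul_of_nonneg_left (hcrude n m hm) (hπnn n)
  have hDCT := tendsto_tsum_of_dominated_convergence hsummable hab hbound
  have hfinal : Tendsto (fun m : ℕ => ∑' n : ℕ, π n * ((m:ℝ) * t n m)) atTop (nhds c) := by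
    have h1 : ∑' n : ℕ, π n * (n:ℝ) = c := LD_tsum_mean c hc
    rw [← h1]
    exact hDCT
  exact hfinal.congr (fun m => (hmain m).symm)
end

section
/- Fix an integer r ≥ 2 and a ∈ (0,1), let θ ∈ [0,∞), and let (μ_n)_{n≥1} ⊂ (0,1) satisfy n·μ_n → θ. For each n ≥ r, let (B^{(n)}_s)_{s≥r} be the single-site mutation chain with mutation rate μ_n started from B^{(n)}_r = 1 at population size r, and let (B̂^{(n)}_s)_{s≥r} be the mutant-descendant chain with mutation rate μ_n started from B̂^{(n)}_r = 1 at population size r. Then, as n → ∞, P[B^{(n)}_n > a·n] → (1−a)^{r−1} and P[B̂^{(n)}_n > a·n] → (1−a)^{r−1}. -/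
open MeasureTheory ProbabilityTheory Filter Set

/-- Transition probabilities of the single-site mutation chain with mutation rate `μ`. -/
noncomputable def singleSiteTrans (μ : ℝ) (r j k : ℕ) : ℝ :=
  if j = k + 1 then ((j : ℝ) / r) * (μ / 3) ^ 2
  else if k = j then
    ((j : ℝ) / r) * (2 * (μ / 3) * (1 - μ / 3)) + (((r : ℝ) - j) / r) * (1 - μ) ^ 2
  else if k = j + 1 then
    ((j : ℝ) / r) * (1 - μ / 3) ^ 2 + (((r : ℝ) - j) / r) * (2 * μ * (1 - μ))
  else if k = j + 2 then (((r : ℝ) - j) / r) * μ ^ 2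
  else 0

/-- Transition probabilities of the mutant-descendant chain with mutation rate `μ`. -/
noncomputable def hatTrans (μ : ℝ) (r j k : ℕ) : ℝ :=
  if k = j then (((r : ℝ) - j) / r) * (1 - μ) ^ 2
  else if k = j + 1 then (j : ℝ) / r + (((r : ℝ) - j) / r) * (2 * μ * (1 - μ))
  else if k = j + 2 then (((r : ℝ) - j) / r) * μ ^ 2
  else 0

/-- `IsMC P q r₀ j₀ B` says that `(B r)_{r ≥ r₀}` is, under the probability measure `P`,
a Markov chain with transition probabilities `q` started from state `j₀` at time `r₀`. -/
def IsMC {Ω : Type*} [MeasurableSpace Ω] (P : Measure Ω)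
    (q : ℕ → ℕ → ℕ → ℝ) (r₀ j₀ : ℕ) (B : ℕ → Ω → ℕ) : Prop :=
  (∀ s, Measurable (B s)) ∧
  P {ω | B r₀ ω = j₀} = 1 ∧
  ∀ r, r₀ ≤ r → ∀ f : ℕ → ℕ,
    (P {ω | ∀ s, r₀ ≤ s → s ≤ r + 1 → B s ω = f s}).toReal
      = (P {ω | ∀ s, r₀ ≤ s → s ≤ r → B s ω = f s}).toReal * q r (f r) (f (r + 1))

namespace CMF


/-- Real rising factorial `v (v+1) ⋯ (v+M-1)` of a natural `v`. -/
noncomputable def Rf (v M : ℕ) : ℝ := ∏ i ∈ Finset.range M, ((v : ℝ) + i)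

lemma Rf_zero (v : ℕ) : Rf v 0 = 1 := by simp [Rf]

lemma Rf_succ (v M : ℕ) : Rf v (M + 1) = Rf v M * ((v : ℝ) + M) := by
  simp [Rf, Finset.prod_range_succ]

lemma Rf_nonneg (v M : ℕ) : 0 ≤ Rf v M := by
  apply Finset.prod_nonneg
  intro i _
  positivity

lemma Rf_pos (v M : ℕ) (hv : 1 ≤ v) : 0 < Rf v M := by
  apply Finset.prod_pos
  intro i _
  have : (1:ℝ) ≤ (v:ℝ) := by exact_mod_cast hv
  positivity

lemma Rf_mono (v M : ℕ) : Rf v M ≤ Rf (v+1) M := by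
  apply Finset.prod_le_prod
  · intro i _; positivity
  · intro i _; push_cast; linarith

lemma Rf_lb (v M : ℕ) : ((v:ℝ))^M ≤ Rf v M := by
  have : ((v:ℝ))^M = ∏ i ∈ Finset.range M, (v:ℝ) := by
    simp
  rw [this]
  apply Finset.prod_le_prod
  · intro i _; positivity
  · intro i _
    have : (0:ℝ) ≤ (i:ℝ) := by positivity
    linarith

lemma Rf_ub (v M : ℕ) : Rf v M ≤ ((v:ℝ) + M)^M := by
  have : ((v:ℝ)+M)^M = ∏ i ∈ Finset.range M, ((v:ℝ)+M) := by
    simp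
  rw [this]
  apply Finset.prod_le_prod
  · intro i _; positivity
  · intro i hi
    have : (i:ℝ) ≤ (M:ℝ) := by
      have := Finset.mem_range.mp hi
      exact_mod_cast this.le
    linarith

lemma Rf_left (v M : ℕ) : (v:ℝ) * Rf (v+1) M = ((v:ℝ) + M) * Rf v M := by
  induction M with
  | zero => simp [Rf_zero]
  | succ M ih =>
      rw [Rf_succ, Rf_succ]
      push_cast
      push_cast at ih
      nlinarith [ih]

lemma Rf_diff_nonneg (v M : ℕ) : 0 ≤ Rf (v+1) M - Rf v M := by
  have := Rf_mono v M; linarith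

lemma Rf_diff (v M : ℕ) : Rf (v+1) M - Rf v M ≤ (M:ℝ) * ((v:ℝ) + M)^(M-1) := by
  induction M with
  | zero => simp [Rf_zero]
  | succ M ih =>
      rw [Rf_succ, Rf_succ]
      have h1 : Rf (v+1) M ≤ ((v:ℝ) + 1 + M)^M := by
        have := Rf_ub (v+1) M; push_cast at this ⊢; linarith
      have h2 : 0 ≤ Rf (v+1) M - Rf v M := Rf_diff_nonneg v M
      have hvM : (0:ℝ) ≤ (v:ℝ) + M := by positivity
      rcases Nat.eq_zero_or_pos M with hM | hM
      · subst hM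
        simp only [Rf_zero, pow_zero, Nat.zero_sub, Nat.cast_zero, Nat.cast_one, one_mul] at *
        push_cast
        nlinarith
      · have hMs : M - 1 + 1 = M := Nat.succ_pred_eq_of_pos hM
        have key : ((v:ℝ) + M) * (Rf (v+1) M - Rf v M) ≤ (M:ℝ) * ((v:ℝ) + M)^M := by
          calc ((v:ℝ) + M) * (Rf (v+1) M - Rf v M)
              ≤ ((v:ℝ) + M) * ((M:ℝ) * ((v:ℝ) + M)^(M-1)) := by
                apply mul_le_mul_of_nonneg_left ih hvM
            _ = (M:ℝ) * (((v:ℝ) + M) * ((v:ℝ) + M)^(M-1)) := by ring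
            _ = (M:ℝ) * ((v:ℝ) + M)^M := by
                rw [← pow_succ']
                rw [hMs]
        have hmono : ((v:ℝ) + M)^M ≤ ((v:ℝ) + 1 + M)^M := by
          apply pow_le_pow_left₀ hvM; linarith
        have goal1 : Rf (v+1) M * ((v:ℝ)+1+M) - Rf v M * ((v:ℝ)+M)
            = ((v:ℝ) + M) * (Rf (v+1) M - Rf v M) + Rf (v+1) M := by ring
        push_cast
        rw [goal1]
        have : (M:ℝ) * ((v:ℝ)+M)^M + ((v:ℝ)+1+M)^M ≤ ((M:ℝ)+1) * ((v:ℝ)+1+M)^M := by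
          nlinarith [hmono]
        have hrw : ((v:ℝ) + ((M:ℝ) + 1)) = ((v:ℝ) + 1 + (M:ℝ)) := by ring
        rw [hrw]
        linarith [key, h1, this]

/-- harmonic sums grow at most like `2√n`. -/
lemma harmonic_le_sqrt (n : ℕ) : ∑ s ∈ Finset.range n, (1:ℝ)/(s+1) ≤ 2 * Real.sqrt n := by
  induction n with
  | zero => simp
  | succ n ih =>
      rw [Finset.sum_range_succ]
      have h1 : Real.sqrt n ≤ Real.sqrt (n+1) := by
        apply Real.sqrt_le_sqrt; push_cast; linarith
      have h2 : (0:ℝ) ≤ (n:ℝ) + 1 := by positivity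
      have h3 : Real.sqrt (n+1) ^ 2 = (n:ℝ)+1 := by
        rw [Real.sq_sqrt]; push_cast; ring_nf; push_cast at h2 ⊢; linarith
      have h4 : Real.sqrt (n+1) ≤ (n:ℝ)+1 := by
        nlinarith [Real.sqrt_nonneg ((n:ℝ)+1), h3]
      have h5 : (0:ℝ) < Real.sqrt (n+1) := by
        have : (0:ℝ) < (n:ℝ)+1 := by positivity
        apply Real.sqrt_pos.mpr; push_cast; linarith
      have key : (1:ℝ)/((n:ℝ)+1) ≤ 2*Real.sqrt (n+1) - 2*Real.sqrt n := by
        rw [div_le_iff₀ (by positivity)]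
        nlinarith [h3, h1, h5, Real.sqrt_nonneg (n:ℝ), Real.sq_sqrt (show (0:ℝ) ≤ (n:ℝ) by positivity)]
      push_cast
      push_cast at ih key
      linarith

/-- `x^k - y^k ≤ k (x - y)` for `0 ≤ y ≤ x ≤ 1`. -/
lemma pow_sub_pow_le (k : ℕ) (x y : ℝ) (hy : 0 ≤ y) (hxy : y ≤ x) (hx : x ≤ 1) :
    x^k - y^k ≤ k * (x - y) := by
  induction k with
  | zero => simp
  | succ k ih =>
      have hxk : x^k ≤ 1 := pow_le_one₀ (le_trans hy hxy) hx
      have hyk : 0 ≤ y^k := pow_nonneg hy k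
      have hxype : y^k ≤ x^k := pow_le_pow_left₀ hy hxy k
      calc x^(k+1) - y^(k+1) = x*(x^k - y^k) + (x-y)*y^k := by ring
        _ ≤ 1*(k*(x-y)) + (x-y)*1 := by
            have h0 : 0 ≤ x - y := by linarith
            have h1 : x*(x^k - y^k) ≤ 1*(x^k - y^k) := by nlinarith
            have h2 : (0:ℝ) ≤ k * (x-y) := by positivity
            have h3 : x^k - y^k ≤ k*(x-y) := ih
            have h4 : (x-y)*y^k ≤ (x-y)*1 := by nlinarith
            nlinarith
        _ = (↑(k+1)) * (x - y) := by push_cast; ring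

/-- Hypotheses on a transition kernel needed for the moment analysis. -/
structure Bundle (q : ℕ → ℕ → ℕ → ℝ) (r : ℕ) (μ : ℝ) : Prop where
  nonneg : ∀ t, r ≤ t → ∀ j, j ≤ t → ∀ k, 0 ≤ q t j k
  supp : ∀ t, r ≤ t → ∀ j, j ≤ t → ∀ k, q t j k ≠ 0 → k ≤ t+1
  sum_one : ∀ t, r ≤ t → ∀ j, j ≤ t → ∑ k ∈ Finset.range (t+2), q t j k = 1
  mom : ∀ M, 1 ≤ M → ∀ t, r ≤ t → ∀ j, j ≤ t →
    |(∑ k ∈ Finset.range (t+2), q t j k * Rf (t+1-k) M) - (((t:ℝ)+M)/t) * Rf (t-j) M|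
      ≤ 5*M*μ*((t:ℝ)+M+2)^(M-1)

/-- The marginal weights of the chain started at `1` at time `r`. -/
noncomputable def Wt (q : ℕ → ℕ → ℕ → ℝ) (r : ℕ) : ℕ → ℕ → ℝ
  | 0 => fun k => if k = 1 then 1 else 0
  | (m+1) => fun k => ∑ j ∈ Finset.range (r+m+1), Wt q r m j * q (r+m) j k

lemma Wt_zero (q) (r k : ℕ) : Wt q r 0 k = if k = 1 then 1 else 0 := rfl
lemma Wt_succ (q) (r m k : ℕ) :
    Wt q r (m+1) k = ∑ j ∈ Finset.range (r+m+1), Wt q r m j * q (r+m) j k := rfl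

variable {q : ℕ → ℕ → ℕ → ℝ} {r : ℕ} {μ : ℝ}

lemma Wt_supp (hb : Bundle q r μ) (hr : 2 ≤ r) :
    ∀ m k, r + m < k → Wt q r m k = 0 := by
  intro m
  induction m with
  | zero =>
      intro k hk
      rw [Wt_zero]
      have : k ≠ 1 := by omega
      simp [this]
  | succ m ih =>
      intro k hk
      rw [Wt_succ]
      apply Finset.sum_eq_zero
      intro j hj
      have hj' : j ≤ r + m := by
        have := Finset.mem_range.mp hj; omega
      by_cases hq : q (r+m) j k = 0
      · rw [hq]; ring
      · exfalso
        have := hb.supp (r+m) (by omega) j hj' k hq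
        omega

lemma Wt_nonneg (hb : Bundle q r μ) (hr : 2 ≤ r) :
    ∀ m k, 0 ≤ Wt q r m k := by
  intro m
  induction m with
  | zero => intro k; rw [Wt_zero]; split <;> norm_num
  | succ m ih =>
      intro k
      rw [Wt_succ]
      apply Finset.sum_nonneg
      intro j hj
      have hj' : j ≤ r + m := by have := Finset.mem_range.mp hj; omega
      exact mul_nonneg (ih j) (hb.nonneg (r+m) (by omega) j hj' k)

lemma Wt_sum (hb : Bundle q r μ) (hr : 2 ≤ r) :
    ∀ m, ∑ k ∈ Finset.range (r+m+1), Wt q r m k = 1 := by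
  intro m
  induction m with
  | zero =>
      simp only [Wt_zero]
      rw [Finset.sum_ite_eq' (Finset.range (r+1)) 1 (fun _ => (1:ℝ))]
      simp only [Finset.mem_range]
      rw [if_pos (by omega)]
  | succ m ih =>
      have hre : r + (m+1) + 1 = (r+m) + 2 := by omega
      rw [hre]
      simp only [Wt_succ]
      rw [Finset.sum_comm]
      have : ∀ j ∈ Finset.range (r+m+1),
          ∑ k ∈ Finset.range ((r+m)+2), Wt q r m j * q (r+m) j k = Wt q r m j := by
        intro j hj
        have hj' : j ≤ r + m := by have := Finset.mem_range.mp hj; omega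
        rw [← Finset.mul_sum, hb.sum_one (r+m) (by omega) j hj', mul_one]
      rw [Finset.sum_congr rfl this, ih]

/-- `M`-th rising-factorial moment of `t - B_t` where `t = r + m`. -/
noncomputable def Vt (q : ℕ → ℕ → ℕ → ℝ) (r M m : ℕ) : ℝ :=
  ∑ k ∈ Finset.range (r+m+1), Wt q r m k * Rf (r+m-k) M

lemma Vt_zero (q) (r M : ℕ) (hr : 2 ≤ r) : Vt q r M 0 = Rf (r-1) M := by
  unfold Vt
  simp only [Wt_zero, Nat.add_zero]
  have : ∀ k ∈ Finset.range (r+1),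
      (if k = 1 then (1:ℝ) else 0) * Rf (r-k) M
        = if k = 1 then Rf (r-1) M else 0 := by
    intro k _
    split <;> simp_all
  rw [Finset.sum_congr rfl this]
  rw [Finset.sum_ite_eq' (Finset.range (r+1)) 1 (fun _ => Rf (r-1) M)]
  rw [if_pos (by simp; omega)]

lemma Vt_step (hb : Bundle q r μ) (hr : 2 ≤ r) (M : ℕ) (hM : 1 ≤ M) (m : ℕ) :
    |Vt q r M (m+1) - (((r+m:ℕ):ℝ)+M)/((r+m:ℕ):ℝ) * Vt q r M m|
      ≤ 5*M*μ*(((r+m:ℕ):ℝ)+M+2)^(M-1) := by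
  set t := r + m with ht
  have hrt : r ≤ t := by omega
  have h1 : Vt q r M (m+1)
      = ∑ j ∈ Finset.range (t+1), Wt q r m j *
          (∑ k ∈ Finset.range (t+2), q t j k * Rf (t+1-k) M) := by
    unfold Vt
    have hre : r + (m+1) + 1 = t + 2 := by omega
    rw [hre]
    simp only [Wt_succ, Finset.sum_mul]
    rw [Finset.sum_comm]
    apply Finset.sum_congr rfl
    intro j _
    rw [Finset.mul_sum]
    apply Finset.sum_congr rfl
    intro k _
    have hsub : r + (m+1) - k = t + 1 - k := by omega
    rw [hsub]
    ring
  have h2 : (((t:ℕ):ℝ)+M)/((t:ℕ):ℝ) * Vt q r M m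
      = ∑ j ∈ Finset.range (t+1), Wt q r m j *
          ((((t:ℕ):ℝ)+M)/((t:ℕ):ℝ) * Rf (t-j) M) := by
    unfold Vt
    rw [Finset.mul_sum]
    apply Finset.sum_congr rfl
    intro j _
    ring
  rw [h1, h2, ← Finset.sum_sub_distrib]
  have h3 : ∀ j ∈ Finset.range (t+1),
      Wt q r m j * (∑ k ∈ Finset.range (t+2), q t j k * Rf (t+1-k) M)
        - Wt q r m j * ((((t:ℕ):ℝ)+M)/((t:ℕ):ℝ) * Rf (t-j) M)
      = Wt q r m j * ((∑ k ∈ Finset.range (t+2), q t j k * Rf (t+1-k) M)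
          - (((t:ℕ):ℝ)+M)/((t:ℕ):ℝ) * Rf (t-j) M) := by
    intro j _; ring
  rw [Finset.sum_congr rfl h3]
  calc |∑ j ∈ Finset.range (t+1), Wt q r m j *
          ((∑ k ∈ Finset.range (t+2), q t j k * Rf (t+1-k) M)
            - (((t:ℕ):ℝ)+M)/((t:ℕ):ℝ) * Rf (t-j) M)|
      ≤ ∑ j ∈ Finset.range (t+1), |Wt q r m j *
          ((∑ k ∈ Finset.range (t+2), q t j k * Rf (t+1-k) M)
            - (((t:ℕ):ℝ)+M)/((t:ℕ):ℝ) * Rf (t-j) M)| := Finset.abs_sum_le_sum_abs _ _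
    _ ≤ ∑ j ∈ Finset.range (t+1), Wt q r m j * (5*M*μ*(((t:ℕ):ℝ)+M+2)^(M-1)) := by
        apply Finset.sum_le_sum
        intro j hj
        have hj' : j ≤ t := by have := Finset.mem_range.mp hj; omega
        rw [abs_mul, abs_of_nonneg (Wt_nonneg hb hr m j)]
        apply mul_le_mul_of_nonneg_left _ (Wt_nonneg hb hr m j)
        exact hb.mom M hM t hrt j hj'
    _ = 5*M*μ*(((t:ℕ):ℝ)+M+2)^(M-1) := by
        rw [← Finset.sum_mul]
        have : r + m + 1 = t + 1 := rfl
        rw [show Finset.range (t+1) = Finset.range (r+m+1) by rw [← ht]]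
        rw [Wt_sum hb hr m, one_mul]

lemma Vt_close (hb : Bundle q r μ) (hr : 2 ≤ r) (hμ : 0 ≤ μ) (M : ℕ) (hM : 1 ≤ M) :
    ∀ m, |Vt q r M m / Rf (r+m) M - Rf (r-1) M / Rf r M|
      ≤ ∑ i ∈ Finset.range m, 5*M*(M+2)^(M-1)*μ/(r+i+1) := by
  intro m
  induction m with
  | zero =>
      simp only [Nat.add_zero, Finset.range_zero, Finset.sum_empty]
      rw [Vt_zero q r M hr, sub_self, abs_zero]
  | succ m ih =>
      set t := r + m with ht
      have htpos : (0:ℝ) < (t:ℝ) := by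
        have : 0 < t := by omega
        exact_mod_cast this
      have hRfpos : 0 < Rf (t+1) M := Rf_pos (t+1) M (by omega)
      have hRtpos : 0 < Rf t M := Rf_pos t M (by omega)
      have hstep := Vt_step hb hr M hM m
      have hX : Rf (t+1) M = (((t:ℝ))+M)/(t:ℝ) * Rf t M := by
        field_simp
        linarith [Rf_left t M]
      have key : |Vt q r M (m+1) / Rf (t+1) M - Vt q r M m / Rf t M|
          ≤ 5*M*(M+2)^(M-1)*μ/((t:ℝ)+1) := by
        have hre : Vt q r M (m+1) / Rf (t+1) M - Vt q r M m / Rf t M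
            = (Vt q r M (m+1) - ((t:ℝ)+M)/(t:ℝ) * Vt q r M m) / Rf (t+1) M := by
          rw [hX]
          have hc : ((t:ℝ)+M) ≠ 0 := by positivity
          field_simp
        rw [hre, abs_div, abs_of_pos hRfpos, div_le_iff₀ hRfpos]
        have hstep' : |Vt q r M (m+1) - ((t:ℝ)+M)/(t:ℝ) * Vt q r M m|
            ≤ 5*M*μ*((t:ℝ)+M+2)^(M-1) := by
          have : ((r+m:ℕ):ℝ) = (t:ℝ) := by norm_cast
          rw [← this]
          exact_mod_cast hstep
        refine le_trans hstep' ?_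
        have hb1 : ((t:ℝ)+M+2)^(M-1) ≤ ((M:ℝ)+2)^(M-1) * ((t:ℝ)+1)^(M-1) := by
          rw [← mul_pow]
          apply pow_le_pow_left₀ (by positivity)
          nlinarith [htpos]
        have hb2 : ((t:ℝ)+1)^M ≤ Rf (t+1) M := by
          have := Rf_lb (t+1) M
          push_cast at this ⊢
          linarith
        have hb3 : ((t:ℝ)+1)^M = ((t:ℝ)+1)^(M-1) * ((t:ℝ)+1) := by
          rw [← pow_succ]
          congr 1
          omega
        rw [div_mul_eq_mul_div, le_div_iff₀ (by positivity)]
        calc 5*(M:ℝ)*μ*((t:ℝ)+M+2)^(M-1) * ((t:ℝ)+1)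
            ≤ 5*(M:ℝ)*μ*(((M:ℝ)+2)^(M-1) * ((t:ℝ)+1)^(M-1)) * ((t:ℝ)+1) := by
              have h5 : (0:ℝ) ≤ 5*(M:ℝ)*μ := by positivity
              exact mul_le_mul_of_nonneg_right (mul_le_mul_of_nonneg_left hb1 h5) (by positivity)
          _ = 5*(M:ℝ)*((M:ℝ)+2)^(M-1)*μ * ((t:ℝ)+1)^M := by
              rw [hb3]; ring
          _ ≤ 5*(M:ℝ)*((M:ℝ)+2)^(M-1)*μ * Rf (t+1) M := by
              apply mul_le_mul_of_nonneg_left hb2 (by positivity)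
      have htr : Vt q r M (m+1) / Rf (r+(m+1)) M - Rf (r-1) M / Rf r M
          = (Vt q r M (m+1) / Rf (t+1) M - Vt q r M m / Rf t M)
            + (Vt q r M m / Rf t M - Rf (r-1) M / Rf r M) := by
        rw [show r + (m+1) = t + 1 by omega]
        ring
      rw [htr, Finset.sum_range_succ]
      have habs := abs_add_le (Vt q r M (m+1) / Rf (t+1) M - Vt q r M m / Rf t M)
        (Vt q r M m / Rf t M - Rf (r-1) M / Rf r M)
      have hlast : 5*(M:ℝ)*(M+2)^(M-1)*μ/((t:ℝ)+1)
          = 5*(M:ℝ)*(M+2)^(M-1)*μ/((r:ℝ)+(m:ℝ)+1) := by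
        rw [ht]; push_cast; ring_nf
      linarith [key, ih, habs, hlast.le, hlast.ge]
lemma Rf_zero_left (M : ℕ) (hM : 1 ≤ M) : Rf 0 M = 0 := by
  unfold Rf
  apply Finset.prod_eq_zero (Finset.mem_range.mpr (show 0 < M by omega))
  norm_num

/-- summing an `ite`-supported function against `g`. -/
lemma sum_ite_mul (N v : ℕ) (c : ℝ) (g : ℕ → ℝ) (hv : v < N) :
    ∑ k ∈ Finset.range N, (if k = v then c else 0) * g k = c * g v := by
  have h : ∀ k ∈ Finset.range N,
      (if k = v then c else 0) * g k = if k = v then c * g v else 0 := by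
    intro k _
    split_ifs with h
    · subst h; ring
    · ring
  rw [Finset.sum_congr rfl h, Finset.sum_ite_eq' (Finset.range N) v (fun _ => c * g v)]
  rw [if_pos (Finset.mem_range.mpr hv)]

lemma sst_bracket (μ : ℝ) (t j : ℕ) (ht : 1 ≤ t) (hj : j ≤ t) (g : ℕ → ℝ) :
    ∑ k ∈ Finset.range (t+2), singleSiteTrans μ t j k * g k
      = ((j:ℝ)/t)*(μ/3)^2 * g (j-1)
      + (((j:ℝ)/t)*(2*(μ/3)*(1-μ/3)) + (((t:ℝ)-j)/t)*(1-μ)^2) * g j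
      + (((j:ℝ)/t)*(1-μ/3)^2 + (((t:ℝ)-j)/t)*(2*μ*(1-μ))) * g (j+1)
      + (((t:ℝ)-j)/t)*μ^2 * g (j+2) := by
  rcases j with _ | j'
  · -- j = 0
    have hdec : ∀ k, singleSiteTrans μ t 0 k
        = (if k = 0 then (((t:ℝ)-0)/t)*(1-μ)^2 else 0)
        + (if k = 1 then (((t:ℝ)-0)/t)*(2*μ*(1-μ)) else 0)
        + (if k = 2 then (((t:ℝ)-0)/t)*μ^2 else 0) := by
      intro k
      unfold singleSiteTrans
      split_ifs <;> first | contradiction | omega | (push_cast; ring)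
    have hsum : ∀ k ∈ Finset.range (t+2), singleSiteTrans μ t 0 k * g k
        = (if k = 0 then (((t:ℝ)-0)/t)*(1-μ)^2 else 0) * g k
        + (if k = 1 then (((t:ℝ)-0)/t)*(2*μ*(1-μ)) else 0) * g k
        + (if k = 2 then (((t:ℝ)-0)/t)*μ^2 else 0) * g k := by
      intro k _
      rw [hdec k]; ring
    rw [Finset.sum_congr rfl hsum]
    rw [Finset.sum_add_distrib, Finset.sum_add_distrib]
    rw [sum_ite_mul (t+2) 0 _ g (by omega), sum_ite_mul (t+2) 1 _ g (by omega),
      sum_ite_mul (t+2) 2 _ g (by omega)]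
    push_cast
    ring
  · -- j = j' + 1
    set j := j' + 1 with hjdef
    have hdec : ∀ k, singleSiteTrans μ t j k
        = (if k = j' then ((j:ℝ)/t)*(μ/3)^2 else 0)
        + (if k = j then ((j:ℝ)/t)*(2*(μ/3)*(1-μ/3)) + (((t:ℝ)-j)/t)*(1-μ)^2 else 0)
        + (if k = j+1 then ((j:ℝ)/t)*(1-μ/3)^2 + (((t:ℝ)-j)/t)*(2*μ*(1-μ)) else 0)
        + (if k = j+2 then (((t:ℝ)-j)/t)*μ^2 else 0) := by
      intro k
      unfold singleSiteTrans
      split_ifs <;> first | contradiction | omega | ring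
    have hsum : ∀ k ∈ Finset.range (t+2), singleSiteTrans μ t j k * g k
        = (if k = j' then ((j:ℝ)/t)*(μ/3)^2 else 0) * g k
        + (if k = j then ((j:ℝ)/t)*(2*(μ/3)*(1-μ/3)) + (((t:ℝ)-j)/t)*(1-μ)^2 else 0) * g k
        + (if k = j+1 then ((j:ℝ)/t)*(1-μ/3)^2 + (((t:ℝ)-j)/t)*(2*μ*(1-μ)) else 0) * g k
        + (if k = j+2 then (((t:ℝ)-j)/t)*μ^2 else 0) * g k := by
      intro k _
      rw [hdec k]; ring
    rw [Finset.sum_congr rfl hsum]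
    rw [Finset.sum_add_distrib, Finset.sum_add_distrib, Finset.sum_add_distrib]
    rw [sum_ite_mul (t+2) j' _ g (by omega), sum_ite_mul (t+2) j _ g (by omega),
      sum_ite_mul (t+2) (j+1) _ g (by omega)]
    have hj1 : j - 1 = j' := by omega
    rw [hj1]
    rcases Nat.lt_or_ge j t with hlt | hge
    · rw [sum_ite_mul (t+2) (j+2) _ g (by omega)]
    · have hjt : j = t := by omega
      have hzero : ((t:ℝ) - (j:ℕ)) = 0 := by
        rw [hjt]; ring
      have h1 : ∑ k ∈ Finset.range (t+2),
          (if k = j+2 then (((t:ℝ)-j)/t)*μ^2 else 0) * g k = 0 := by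
        apply Finset.sum_eq_zero
        intro k hk
        split_ifs with h
        · exfalso; have := Finset.mem_range.mp hk; omega
        · ring
      rw [h1, hzero]
      ring

lemma hat_bracket (μ : ℝ) (t j : ℕ) (ht : 1 ≤ t) (hj : j ≤ t) (g : ℕ → ℝ) :
    ∑ k ∈ Finset.range (t+2), hatTrans μ t j k * g k
      = (((t:ℝ)-j)/t)*(1-μ)^2 * g j
      + ((j:ℝ)/t + (((t:ℝ)-j)/t)*(2*μ*(1-μ))) * g (j+1)
      + (((t:ℝ)-j)/t)*μ^2 * g (j+2) := by
  have hdec : ∀ k, hatTrans μ t j k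
      = (if k = j then (((t:ℝ)-j)/t)*(1-μ)^2 else 0)
      + (if k = j+1 then (j:ℝ)/t + (((t:ℝ)-j)/t)*(2*μ*(1-μ)) else 0)
      + (if k = j+2 then (((t:ℝ)-j)/t)*μ^2 else 0) := by
    intro k
    unfold hatTrans
    split_ifs <;> first | contradiction | omega | ring
  have hsum : ∀ k ∈ Finset.range (t+2), hatTrans μ t j k * g k
      = (if k = j then (((t:ℝ)-j)/t)*(1-μ)^2 else 0) * g k
      + (if k = j+1 then (j:ℝ)/t + (((t:ℝ)-j)/t)*(2*μ*(1-μ)) else 0) * g k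
      + (if k = j+2 then (((t:ℝ)-j)/t)*μ^2 else 0) * g k := by
    intro k _
    rw [hdec k]; ring
  rw [Finset.sum_congr rfl hsum]
  rw [Finset.sum_add_distrib, Finset.sum_add_distrib]
  rw [sum_ite_mul (t+2) j _ g (by omega), sum_ite_mul (t+2) (j+1) _ g (by omega)]
  rcases Nat.lt_or_ge j t with hlt | hge
  · rw [sum_ite_mul (t+2) (j+2) _ g (by omega)]
  · have hjt : j = t := by omega
    have hzero : ((t:ℝ) - (j:ℕ)) = 0 := by rw [hjt]; ring
    have h1 : ∑ k ∈ Finset.range (t+2),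
        (if k = j+2 then (((t:ℝ)-j)/t)*μ^2 else 0) * g k = 0 := by
      apply Finset.sum_eq_zero
      intro k hk
      split_ifs with h
      · exfalso; have := Finset.mem_range.mp hk; omega
      · ring
    rw [h1, hzero]
    ring

lemma abs_two_term (μ c1 c2 x y D' : ℝ) (hμ0 : 0 ≤ μ) (hD' : 0 ≤ D')
    (hc1 : 0 ≤ c1) (hc2 : 0 ≤ c2)
    (hx : |x| ≤ D') (hy : |y| ≤ D') :
    |c1*x + c2*y| ≤ c1*D' + c2*D' := by
  calc |c1*x + c2*y| ≤ |c1*x| + |c2*y| := abs_add_le _ _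
    _ = c1*|x| + c2*|y| := by rw [abs_mul, abs_mul, abs_of_nonneg hc1, abs_of_nonneg hc2]
    _ ≤ c1*D' + c2*D' := by gcongr

set_option maxHeartbeats 1000000 in
lemma mom_core (A U tR μ M' F0 F1 F2 F3 D' : ℝ)
    (hA : 0 ≤ A) (hU : 0 ≤ U) (hAU : A + U = tR) (ht : 1 ≤ tR)
    (hμ0 : 0 ≤ μ) (hμ1 : μ ≤ 1) (hD' : 0 ≤ D')
    (h10 : 0 ≤ F2 - F1) (h1D : F2 - F1 ≤ D')
    (h20 : 0 ≤ F3 - F2) (h2D : F3 - F2 ≤ D')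
    (h00 : 0 ≤ F1 - F0) (h0D : F1 - F0 ≤ D')
    (hid : U*F2 - (U+M')*F1 = 0) :
    |A/tR*(μ/3)^2*F3 + (A/tR*(2*(μ/3)*(1-μ/3)) + U/tR*(1-μ)^2)*F2
      + (A/tR*(1-μ/3)^2 + U/tR*(2*μ*(1-μ)))*F1 + U/tR*μ^2*F0
      - (tR+M')/tR*F1| ≤ 3*μ*D' := by
  have htpos : (0:ℝ) < tR := by linarith
  have hexp : A/tR*(μ/3)^2*F3 + (A/tR*(2*(μ/3)*(1-μ/3)) + U/tR*(1-μ)^2)*F2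
      + (A/tR*(1-μ/3)^2 + U/tR*(2*μ*(1-μ)))*F1 + U/tR*μ^2*F0
      - (tR+M')/tR*F1
      = (A*((2*μ/3)*(F2-F1) + (μ^2/9)*((F3-F2)-(F2-F1)))
        + U*(-(2*μ)*(F2-F1) + μ^2*((F2-F1)-(F1-F0)))
        + ((U*F2 - (U+M')*F1) + (A + U - tR)*F1)) / tR := by
    field_simp
    ring
  have hAU0 : A + U - tR = 0 := by linarith
  rw [hexp, hid, hAU0, zero_mul, add_zero, add_zero]
  rw [abs_div, abs_of_pos htpos, div_le_iff₀ htpos]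
  have hd1 : |F2 - F1| ≤ D' := abs_le.mpr ⟨by linarith, h1D⟩
  have hd21 : |(F3-F2)-(F2-F1)| ≤ D' := abs_le.mpr ⟨by linarith, by linarith⟩
  have hd10 : |(F2-F1)-(F1-F0)| ≤ D' := abs_le.mpr ⟨by linarith, by linarith⟩
  have hT1 : |A*((2*μ/3)*(F2-F1) + (μ^2/9)*((F3-F2)-(F2-F1)))| ≤ A*(μ*D') := by
    rw [abs_mul, abs_of_nonneg hA]
    apply mul_le_mul_of_nonneg_left _ hA
    calc |(2*μ/3)*(F2-F1) + (μ^2/9)*((F3-F2)-(F2-F1))|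
        ≤ (2*μ/3)*D' + (μ^2/9)*D' :=
          abs_two_term μ _ _ _ _ D' hμ0 hD' (by positivity) (by positivity) hd1 hd21
      _ ≤ μ*D' := by
          nlinarith [mul_nonneg hμ0 hD', mul_le_mul_of_nonneg_right hμ1 (mul_nonneg hμ0 hD')]
  have hT2 : |U*(-(2*μ)*(F2-F1) + μ^2*((F2-F1)-(F1-F0)))| ≤ U*(3*(μ*D')) := by
    rw [abs_mul, abs_of_nonneg hU]
    apply mul_le_mul_of_nonneg_left _ hU
    calc |(-(2*μ))*(F2-F1) + μ^2*((F2-F1)-(F1-F0))|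
        ≤ |(-(2*μ))*(F2-F1)| + |μ^2*((F2-F1)-(F1-F0))| := abs_add_le _ _
      _ = (2*μ)*|F2-F1| + μ^2*|(F2-F1)-(F1-F0)| := by
          rw [abs_mul, abs_mul, abs_neg, abs_of_nonneg (by positivity : (0:ℝ) ≤ 2*μ),
            abs_of_nonneg (by positivity : (0:ℝ) ≤ μ^2)]
      _ ≤ (2*μ)*D' + μ^2*D' := by gcongr
      _ ≤ 3*(μ*D') := by
          nlinarith [mul_nonneg hμ0 hD', mul_le_mul_of_nonneg_right hμ1 (mul_nonneg hμ0 hD')]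
  have hμD : 0 ≤ μ*D' := by positivity
  calc |A*((2*μ/3)*(F2-F1) + (μ^2/9)*((F3-F2)-(F2-F1)))
        + U*(-(2*μ)*(F2-F1) + μ^2*((F2-F1)-(F1-F0)))|
      ≤ |A*((2*μ/3)*(F2-F1) + (μ^2/9)*((F3-F2)-(F2-F1)))|
        + |U*(-(2*μ)*(F2-F1) + μ^2*((F2-F1)-(F1-F0)))| := abs_add_le _ _
    _ ≤ A*(μ*D') + U*(3*(μ*D')) := by linarith
    _ ≤ 3*μ*D'*tR := by nlinarith [mul_nonneg hA hμD, mul_nonneg hU hμD]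

set_option maxHeartbeats 1000000 in
lemma mom_core_hat (A U tR μ M' F0 F1 F2 D' : ℝ)
    (hA : 0 ≤ A) (hU : 0 ≤ U) (hAU : A + U = tR) (ht : 1 ≤ tR)
    (hμ0 : 0 ≤ μ) (hμ1 : μ ≤ 1) (hD' : 0 ≤ D')
    (h10 : 0 ≤ F2 - F1) (h1D : F2 - F1 ≤ D')
    (h00 : 0 ≤ F1 - F0) (h0D : F1 - F0 ≤ D')
    (hid : U*F2 - (U+M')*F1 = 0) :
    |U/tR*(1-μ)^2*F2 + (A/tR + U/tR*(2*μ*(1-μ)))*F1 + U/tR*μ^2*F0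
      - (tR+M')/tR*F1| ≤ 3*μ*D' := by
  have htpos : (0:ℝ) < tR := by linarith
  have hexp : U/tR*(1-μ)^2*F2 + (A/tR + U/tR*(2*μ*(1-μ)))*F1 + U/tR*μ^2*F0
      - (tR+M')/tR*F1
      = (U*(-(2*μ)*(F2-F1) + μ^2*((F2-F1)-(F1-F0)))
        + ((U*F2 - (U+M')*F1) + (A + U - tR)*F1)) / tR := by
    field_simp
    ring
  have hAU0 : A + U - tR = 0 := by linarith
  rw [hexp, hid, hAU0, zero_mul, add_zero, add_zero]
  rw [abs_div, abs_of_pos htpos, div_le_iff₀ htpos]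
  have hd1 : |F2 - F1| ≤ D' := abs_le.mpr ⟨by linarith, h1D⟩
  have hd10 : |(F2-F1)-(F1-F0)| ≤ D' := abs_le.mpr ⟨by linarith, by linarith⟩
  have hT2 : |U*(-(2*μ)*(F2-F1) + μ^2*((F2-F1)-(F1-F0)))| ≤ U*(3*(μ*D')) := by
    rw [abs_mul, abs_of_nonneg hU]
    apply mul_le_mul_of_nonneg_left _ hU
    calc |(-(2*μ))*(F2-F1) + μ^2*((F2-F1)-(F1-F0))|
        ≤ |(-(2*μ))*(F2-F1)| + |μ^2*((F2-F1)-(F1-F0))| := abs_add_le _ _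
      _ = (2*μ)*|F2-F1| + μ^2*|(F2-F1)-(F1-F0)| := by
          rw [abs_mul, abs_mul, abs_neg, abs_of_nonneg (by positivity : (0:ℝ) ≤ 2*μ),
            abs_of_nonneg (by positivity : (0:ℝ) ≤ μ^2)]
      _ ≤ (2*μ)*D' + μ^2*D' := by gcongr
      _ ≤ 3*(μ*D') := by
          nlinarith [mul_nonneg hμ0 hD', mul_le_mul_of_nonneg_right hμ1 (mul_nonneg hμ0 hD')]
  have hμD : 0 ≤ μ*D' := by positivity
  nlinarith [hT2, mul_nonneg hA hμD, mul_nonneg hU hμD, abs_nonneg (U*(-(2*μ)*(F2-F1) + μ^2*((F2-F1)-(F1-F0))))]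

/-- uniform bound on the step of the rising factorial. -/
lemma Rf_diff_le (v M t : ℕ) (hv : v ≤ t+1) :
    Rf (v+1) M - Rf v M ≤ (M:ℝ)*((t:ℝ)+M+2)^(M-1) := by
  refine le_trans (Rf_diff v M) ?_
  apply mul_le_mul_of_nonneg_left _ (by positivity)
  apply pow_le_pow_left₀ (by positivity)
  have : (v:ℝ) ≤ (t:ℝ)+1 := by exact_mod_cast hv
  linarith

lemma sst_mom (μ : ℝ) (hμ0 : 0 ≤ μ) (hμ1 : μ ≤ 1) (M : ℕ) (hM : 1 ≤ M)
    (t : ℕ) (ht : 2 ≤ t) (j : ℕ) (hj : j ≤ t) :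
    |(∑ k ∈ Finset.range (t+2), singleSiteTrans μ t j k * Rf (t+1-k) M)
      - (((t:ℝ)+M)/t) * Rf (t-j) M| ≤ 5*M*μ*((t:ℝ)+M+2)^(M-1) := by
  set u := t - j with hu
  have hju : j + u = t := by omega
  rw [sst_bracket μ t j (by omega) hj (fun k => Rf (t+1-k) M)]
  beta_reduce
  have e1 : t+1-j = u+1 := by omega
  have e2 : t+1-(j+1) = u := by omega
  have e3 : t+1-(j+2) = u-1 := by omega
  rw [e1, e2, e3]
  have hterm1 : ((j:ℝ)/t)*(μ/3)^2 * Rf (t+1-(j-1)) M = ((j:ℝ)/t)*(μ/3)^2 * Rf (u+2) M := by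
    rcases Nat.eq_zero_or_pos j with h0 | h0
    · rw [h0]; norm_num
    · have e4 : t+1-(j-1) = u+2 := by omega
      rw [e4]
  rw [hterm1]
  have hcastT : ((t:ℝ)) = (j:ℝ) + (u:ℝ) := by exact_mod_cast congrArg (fun x : ℕ => (x:ℝ)) hju.symm
  have hcastU : ((t:ℝ) - (j:ℕ)) = (u:ℝ) := by linarith
  rw [hcastU]
  set D' := (M:ℝ)*((t:ℝ)+M+2)^(M-1) with hD'def
  have hD' : 0 ≤ D' := by positivity
  have h10 : 0 ≤ Rf (u+1) M - Rf u M := Rf_diff_nonneg u M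
  have h1D : Rf (u+1) M - Rf u M ≤ D' := Rf_diff_le u M t (by omega)
  have h20 : 0 ≤ Rf (u+2) M - Rf (u+1) M := Rf_diff_nonneg (u+1) M
  have h2D : Rf (u+2) M - Rf (u+1) M ≤ D' := Rf_diff_le (u+1) M t (by omega)
  have h00 : 0 ≤ Rf u M - Rf (u-1) M := by
    rcases Nat.eq_zero_or_pos u with h0 | h0
    · rw [h0]; norm_num
    · have : u - 1 + 1 = u := by omega
      rw [← this]
      exact Rf_diff_nonneg (u-1) M
  have h0D : Rf u M - Rf (u-1) M ≤ D' := by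
    rcases Nat.eq_zero_or_pos u with h0 | h0
    · rw [h0]; simp [hD'def]; positivity
    · have huu : u - 1 + 1 = u := by omega
      calc Rf u M - Rf (u-1) M = Rf ((u-1)+1) M - Rf (u-1) M := by rw [huu]
        _ ≤ D' := Rf_diff_le (u-1) M t (by omega)
  have hid : (u:ℝ) * Rf (u+1) M - ((u:ℝ)+(M:ℝ)) * Rf u M = 0 := by
    have := Rf_left u M
    linarith
  have core := mom_core ((j:ℝ)) ((u:ℝ)) ((t:ℝ)) μ ((M:ℝ))
    (Rf (u-1) M) (Rf u M) (Rf (u+1) M) (Rf (u+2) M) D'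
    (by positivity) (by positivity) (by linarith)
    (by exact_mod_cast Nat.one_le_iff_ne_zero.mpr (by omega))
    hμ0 hμ1 hD' h10 h1D h20 h2D h00 h0D hid
  calc |(j:ℝ)/t*(μ/3)^2*Rf (u+2) M + ((j:ℝ)/t*(2*(μ/3)*(1-μ/3)) + (u:ℝ)/t*(1-μ)^2)*Rf (u+1) M
        + ((j:ℝ)/t*(1-μ/3)^2 + (u:ℝ)/t*(2*μ*(1-μ)))*Rf u M + (u:ℝ)/t*μ^2*Rf (u-1) M
        - ((t:ℝ)+M)/t*Rf u M| ≤ 3*μ*D' := core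
    _ ≤ 5*M*μ*((t:ℝ)+M+2)^(M-1) := by
        rw [hD'def]
        have hMr : (1:ℝ) ≤ (M:ℝ) := by exact_mod_cast hM
        nlinarith [pow_nonneg (show (0:ℝ) ≤ (t:ℝ)+M+2 by positivity) (M-1),
          mul_nonneg hμ0 (pow_nonneg (show (0:ℝ) ≤ (t:ℝ)+M+2 by positivity) (M-1))]

lemma hat_mom (μ : ℝ) (hμ0 : 0 ≤ μ) (hμ1 : μ ≤ 1) (M : ℕ) (hM : 1 ≤ M)
    (t : ℕ) (ht : 2 ≤ t) (j : ℕ) (hj : j ≤ t) :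
    |(∑ k ∈ Finset.range (t+2), hatTrans μ t j k * Rf (t+1-k) M)
      - (((t:ℝ)+M)/t) * Rf (t-j) M| ≤ 5*M*μ*((t:ℝ)+M+2)^(M-1) := by
  set u := t - j with hu
  have hju : j + u = t := by omega
  rw [hat_bracket μ t j (by omega) hj (fun k => Rf (t+1-k) M)]
  beta_reduce
  have e1 : t+1-j = u+1 := by omega
  have e2 : t+1-(j+1) = u := by omega
  have e3 : t+1-(j+2) = u-1 := by omega
  rw [e1, e2, e3]
  have hcastT : ((t:ℝ)) = (j:ℝ) + (u:ℝ) := by exact_mod_cast congrArg (fun x : ℕ => (x:ℝ)) hju.symm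
  have hcastU : ((t:ℝ) - (j:ℕ)) = (u:ℝ) := by linarith
  rw [hcastU]
  set D' := (M:ℝ)*((t:ℝ)+M+2)^(M-1) with hD'def
  have hD' : 0 ≤ D' := by positivity
  have h10 : 0 ≤ Rf (u+1) M - Rf u M := Rf_diff_nonneg u M
  have h1D : Rf (u+1) M - Rf u M ≤ D' := Rf_diff_le u M t (by omega)
  have h00 : 0 ≤ Rf u M - Rf (u-1) M := by
    rcases Nat.eq_zero_or_pos u with h0 | h0
    · rw [h0]; norm_num
    · have : u - 1 + 1 = u := by omega
      rw [← this]
      exact Rf_diff_nonneg (u-1) M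
  have h0D : Rf u M - Rf (u-1) M ≤ D' := by
    rcases Nat.eq_zero_or_pos u with h0 | h0
    · rw [h0]; simp [hD'def]; positivity
    · have huu : u - 1 + 1 = u := by omega
      calc Rf u M - Rf (u-1) M = Rf ((u-1)+1) M - Rf (u-1) M := by rw [huu]
        _ ≤ D' := Rf_diff_le (u-1) M t (by omega)
  have hid : (u:ℝ) * Rf (u+1) M - ((u:ℝ)+(M:ℝ)) * Rf u M = 0 := by
    have := Rf_left u M
    linarith
  have core := mom_core_hat ((j:ℝ)) ((u:ℝ)) ((t:ℝ)) μ ((M:ℝ))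
    (Rf (u-1) M) (Rf u M) (Rf (u+1) M) D'
    (by positivity) (by positivity) (by linarith)
    (by exact_mod_cast Nat.one_le_iff_ne_zero.mpr (by omega))
    hμ0 hμ1 hD' h10 h1D h00 h0D hid
  calc |(u:ℝ)/t*(1-μ)^2*Rf (u+1) M + ((j:ℝ)/t + (u:ℝ)/t*(2*μ*(1-μ)))*Rf u M
        + (u:ℝ)/t*μ^2*Rf (u-1) M - ((t:ℝ)+M)/t*Rf u M| ≤ 3*μ*D' := core
    _ ≤ 5*M*μ*((t:ℝ)+M+2)^(M-1) := by
        rw [hD'def]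
        have hMr : (1:ℝ) ≤ (M:ℝ) := by exact_mod_cast hM
        nlinarith [pow_nonneg (show (0:ℝ) ≤ (t:ℝ)+M+2 by positivity) (M-1),
          mul_nonneg hμ0 (pow_nonneg (show (0:ℝ) ≤ (t:ℝ)+M+2 by positivity) (M-1))]

lemma sst_bundle (μ : ℝ) (hμ : μ ∈ Set.Ioo (0:ℝ) 1) (r : ℕ) (hr : 2 ≤ r) :
    Bundle (singleSiteTrans μ) r μ := by
  obtain ⟨hμ0, hμ1⟩ := hμ
  constructor
  · -- nonneg
    intro t htr j hj k
    have htpos : (0:ℝ) < t := by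
      have : 0 < t := by omega
      exact_mod_cast this
    have hjt : (j:ℝ) ≤ (t:ℝ) := by exact_mod_cast hj
    have h3 : (0:ℝ) ≤ (j:ℝ)/t := by positivity
    have h4 : (0:ℝ) ≤ ((t:ℝ)-j)/t := by
      apply div_nonneg (by linarith) (by linarith)
    have m1 : (0:ℝ) ≤ ((j:ℝ)/t)*(2*(μ/3)*(1-μ/3)) := by
      apply mul_nonneg h3; nlinarith
    have m2 : (0:ℝ) ≤ (((t:ℝ)-j)/t)*(1-μ)^2 := mul_nonneg h4 (sq_nonneg _)
    have m3 : (0:ℝ) ≤ ((j:ℝ)/t)*(1-μ/3)^2 := mul_nonneg h3 (sq_nonneg _)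
    have m4 : (0:ℝ) ≤ (((t:ℝ)-j)/t)*(2*μ*(1-μ)) := by
      apply mul_nonneg h4; nlinarith
    have m5 : (0:ℝ) ≤ (((t:ℝ)-j)/t)*μ^2 := mul_nonneg h4 (sq_nonneg _)
    have m6 : (0:ℝ) ≤ ((j:ℝ)/t)*(μ/3)^2 := mul_nonneg h3 (sq_nonneg _)
    unfold singleSiteTrans
    split_ifs <;> linarith
  · -- supp
    intro t htr j hj k hne
    unfold singleSiteTrans at hne
    split_ifs at hne with h1 h2 h3 h4
    · omega
    · omega
    · omega
    · -- k = j + 2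
      rcases Nat.lt_or_ge j t with hlt | hge
      · omega
      · exfalso
        apply hne
        have : j = t := by omega
        rw [this]
        simp
    · exact absurd rfl hne
  · -- sum_one
    intro t htr j hj
    have htpos : (0:ℝ) < t := by
      have : 0 < t := by omega
      exact_mod_cast this
    have h := sst_bracket μ t j (by omega) hj (fun _ => (1:ℝ))
    simp only [mul_one] at h
    rw [h]
    field_simp
    ring
  · -- mom
    intro M hM t htr j hj
    exact sst_mom μ hμ0.le hμ1.le M hM t (by omega) j hj

lemma hat_bundle (μ : ℝ) (hμ : μ ∈ Set.Ioo (0:ℝ) 1) (r : ℕ) (hr : 2 ≤ r) :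
    Bundle (hatTrans μ) r μ := by
  obtain ⟨hμ0, hμ1⟩ := hμ
  constructor
  · intro t htr j hj k
    have htpos : (0:ℝ) < t := by
      have : 0 < t := by omega
      exact_mod_cast this
    have hjt : (j:ℝ) ≤ (t:ℝ) := by exact_mod_cast hj
    have h3 : (0:ℝ) ≤ (j:ℝ)/t := by positivity
    have h4 : (0:ℝ) ≤ ((t:ℝ)-j)/t := by
      apply div_nonneg (by linarith) (by linarith)
    have m2 : (0:ℝ) ≤ (((t:ℝ)-j)/t)*(1-μ)^2 := mul_nonneg h4 (sq_nonneg _)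
    have m4 : (0:ℝ) ≤ (((t:ℝ)-j)/t)*(2*μ*(1-μ)) := by
      apply mul_nonneg h4; nlinarith
    have m5 : (0:ℝ) ≤ (((t:ℝ)-j)/t)*μ^2 := mul_nonneg h4 (sq_nonneg _)
    unfold hatTrans
    split_ifs <;> linarith
  · intro t htr j hj k hne
    unfold hatTrans at hne
    split_ifs at hne with h1 h2 h3
    · omega
    · omega
    · rcases Nat.lt_or_ge j t with hlt | hge
      · omega
      · exfalso
        apply hne
        have : j = t := by omega
        rw [this]
        simp
    · exact absurd rfl hne
  · intro t htr j hj
    have htpos : (0:ℝ) < t := by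
      have : 0 < t := by omega
      exact_mod_cast this
    have h := hat_bracket μ t j (by omega) hj (fun _ => (1:ℝ))
    simp only [mul_one] at h
    rw [h]
    field_simp
    ring
  · intro M hM t htr j hj
    exact hat_mom μ hμ0.le hμ1.le M hM t (by omega) j hj

section Measure

variable {Ω : Type} [MeasurableSpace Ω] {P : Measure Ω} [IsProbabilityMeasure P]
  {q : ℕ → ℕ → ℕ → ℝ} {r : ℕ} {B : ℕ → Ω → ℕ}

/-- cylinder set -/
def Cyl (B : ℕ → Ω → ℕ) (r m : ℕ) (f : Fin (m+1) → ℕ) : Set Ω :=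
  {ω | ∀ i : Fin (m+1), B (r + i.val) ω = f i}

/-- path weight -/
noncomputable def wpath (q : ℕ → ℕ → ℕ → ℝ) (r : ℕ) : (m : ℕ) → (Fin (m+1) → ℕ) → ℝ
  | 0, f => if f 0 = 1 then 1 else 0
  | (m+1), f => wpath q r m (Fin.init f)
      * q (r+m) (f (Fin.castSucc (Fin.last m))) (f (Fin.last (m+1)))

lemma Cyl_measurable (hmc : IsMC P q r 1 B) (m : ℕ) (f : Fin (m+1) → ℕ) :
    MeasurableSet (Cyl B r m f) := by
  have : Cyl B r m f = ⋂ i : Fin (m+1), (B (r + i.val))⁻¹' {f i} := by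
    ext ω; simp [Cyl, Set.mem_iInter]
  rw [this]
  exact MeasurableSet.iInter fun i => (hmc.1 (r + i.val)) (measurableSet_singleton _)

lemma Cyl_zero_eq (f : Fin 1 → ℕ) : Cyl B r 0 f = {ω | B r ω = f 0} := by
  ext ω
  constructor
  · intro h
    have := h 0
    simpa using this
  · intro h i
    have : i = 0 := by
      apply Fin.ext
      omega
    rw [this]
    simpa using h

lemma P_start (hmc : IsMC P q r 1 B) (j : ℕ) :
    (P {ω | B r ω = j}).toReal = if j = 1 then 1 else 0 := by
  split_ifs with h
  · subst h
    rw [hmc.2.1]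
    simp
  · have hnull : P {ω | B r ω = j} = 0 := by
      have hsub : {ω | B r ω = j} ⊆ {ω | B r ω = 1}ᶜ := by
        intro ω hω
        simp only [Set.mem_compl_iff, Set.mem_setOf_eq] at *
        rw [hω]
        exact h
      have hc : P ({ω | B r ω = 1}ᶜ) = 0 := by
        have hms : MeasurableSet {ω | B r ω = 1} := (hmc.1 r) (measurableSet_singleton 1)
        rw [measure_compl hms (measure_ne_top P _), hmc.2.1, measure_univ]
        simp
      exact measure_mono_null hsub hc
    rw [hnull]
    simp

lemma Cyl_formula (hmc : IsMC P q r 1 B) :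
    ∀ m (f : Fin (m+1) → ℕ), (P (Cyl B r m f)).toReal = wpath q r m f := by
  intro m
  induction m with
  | zero =>
      intro f
      rw [Cyl_zero_eq, wpath]
      exact P_start hmc (f 0)
  | succ m ih =>
      intro f
      classical
      set F : ℕ → ℕ := fun s => if h : r ≤ s ∧ s ≤ r+(m+1) then f ⟨s - r, by omega⟩ else 0
        with hF
      have key := hmc.2.2 (r+m) (Nat.le_add_right r m) F
      have hset1 : {ω | ∀ s, r ≤ s → s ≤ (r+m) + 1 → B s ω = F s} = Cyl B r (m+1) f := by
        ext ω
        constructor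
        · intro h i
          have h1 : r ≤ r + i.val := Nat.le_add_right _ _
          have h2 : r + i.val ≤ (r+m)+1 := by omega
          have := h (r + i.val) h1 h2
          rw [this]
          simp only [hF]
          have hc : r ≤ r + i.val ∧ r + i.val ≤ r + (m+1) := ⟨h1, by omega⟩
          rw [dif_pos hc]
          congr 1
          apply Fin.ext
          simp
        · intro h s hs1 hs2
          have hiv : s - r < m + 2 := by omega
          have := h ⟨s - r, hiv⟩
          simp only at this
          have hsr : r + (s - r) = s := by omega
          rw [hsr] at this
          rw [this]
          simp only [hF]
          rw [dif_pos ⟨hs1, by omega⟩]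
      have hset2 : {ω | ∀ s, r ≤ s → s ≤ r+m → B s ω = F s} = Cyl B r m (Fin.init f) := by
        ext ω
        constructor
        · intro h i
          have h1 : r ≤ r + i.val := Nat.le_add_right _ _
          have h2 : r + i.val ≤ r+m := by omega
          have := h (r + i.val) h1 h2
          rw [this]
          simp only [hF]
          rw [dif_pos ⟨h1, by omega⟩]
          show f _ = Fin.init f i
          rw [Fin.init]
          congr 1
          apply Fin.ext
          simp [Fin.castSucc, Fin.castAdd, Fin.castLE]
        · intro h s hs1 hs2
          have hiv : s - r < m + 1 := by omega
          have := h ⟨s - r, hiv⟩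
          simp only at this
          have hsr : r + (s - r) = s := by omega
          rw [hsr] at this
          rw [this]
          simp only [hF]
          rw [dif_pos ⟨hs1, by omega⟩]
          show Fin.init f _ = f _
          rw [Fin.init]
          congr 1
      have hFrm : F (r+m) = f (Fin.castSucc (Fin.last m)) := by
        simp only [hF]
        rw [dif_pos ⟨Nat.le_add_right r m, by omega⟩]
        congr 1
        apply Fin.ext
        simp
      have hFrm1 : F ((r+m)+1) = f (Fin.last (m+1)) := by
        simp only [hF]
        rw [dif_pos ⟨by omega, by omega⟩]
        congr 1
        apply Fin.ext
        simp
        omega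
      rw [hset1, hset2, hFrm, hFrm1] at key
      rw [key, ih (Fin.init f)]
      rfl

lemma wpath_succ (m : ℕ) (f : Fin (m+2) → ℕ) :
    wpath q r (m+1) f = wpath q r m (Fin.init f)
      * q (r+m) (f (Fin.castSucc (Fin.last m))) (f (Fin.last (m+1))) := rfl

lemma wpath_snoc (m : ℕ) (g : Fin (m+1) → ℕ) (k : ℕ) :
    wpath q r (m+1) (Fin.snoc g k) = wpath q r m g * q (r+m) (g (Fin.last m)) k := by
  rw [wpath_succ, Fin.init_snoc, Fin.snoc_castSucc, Fin.snoc_last]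

lemma marg_eq_tsum (hmc : IsMC P q r 1 B) (m j : ℕ) :
    (P {ω | B (r+m) ω = j}).toReal
      = ∑' g : {g : Fin (m+1) → ℕ // g (Fin.last m) = j}, wpath q r m g.1 := by
  have hset : {ω | B (r+m) ω = j}
      = ⋃ g : {g : Fin (m+1) → ℕ // g (Fin.last m) = j}, Cyl B r m g.1 := by
    ext ω
    constructor
    · intro h
      refine Set.mem_iUnion.mpr ⟨⟨fun i => B (r + i.val) ω, ?_⟩, ?_⟩
      · show B (r + (Fin.last m).val) ω = j
        simpa using h
      · intro i; rfl
    · intro h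
      obtain ⟨g, hg⟩ := Set.mem_iUnion.mp h
      have := hg (Fin.last m)
      simp only [Fin.val_last] at this
      show B (r+m) ω = j
      rw [this, g.2]
  have hdisj : Pairwise (Function.onFun Disjoint
      (fun g : {g : Fin (m+1) → ℕ // g (Fin.last m) = j} => Cyl B r m g.1)) := by
    intro g g' hne
    rw [Function.onFun]
    rw [Set.disjoint_left]
    intro ω hω hω'
    apply hne
    apply Subtype.ext
    funext i
    have h1 := hω i
    have h2 := hω' i
    rw [← h1, ← h2]
  rw [hset, measure_iUnion hdisj (fun g => Cyl_measurable hmc m g.1)]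
  rw [ENNReal.tsum_toReal_eq (fun g => measure_ne_top P _)]
  exact tsum_congr fun g => Cyl_formula hmc m g.1

lemma wpath_summable (hmc : IsMC P q r 1 B) (m j : ℕ) :
    Summable (fun g : {g : Fin (m+1) → ℕ // g (Fin.last m) = j} => wpath q r m g.1) := by
  have : (fun g : {g : Fin (m+1) → ℕ // g (Fin.last m) = j} => wpath q r m g.1)
      = fun g => (P (Cyl B r m g.1)).toReal := by
    funext g
    rw [Cyl_formula hmc m g.1]
  rw [this]
  apply ENNReal.summable_toReal
  have hdisj : Pairwise (Function.onFun Disjoint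
      (fun g : {g : Fin (m+1) → ℕ // g (Fin.last m) = j} => Cyl B r m g.1)) := by
    intro g g' hne
    rw [Function.onFun, Set.disjoint_left]
    intro ω hω hω'
    apply hne
    apply Subtype.ext
    funext i
    rw [← hω i, ← hω' i]
  rw [← measure_iUnion hdisj (fun g => Cyl_measurable hmc m g.1)]
  exact measure_ne_top P _

lemma joint_eq (hmc : IsMC P q r 1 B) (m j k : ℕ) :
    (P ({ω | B (r+m) ω = j} ∩ {ω | B (r+m+1) ω = k})).toReal
      = (P {ω | B (r+m) ω = j}).toReal * q (r+m) j k := by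
  have hset : {ω | B (r+m) ω = j} ∩ {ω | B (r+m+1) ω = k}
      = ⋃ g : {g : Fin (m+1) → ℕ // g (Fin.last m) = j},
          Cyl B r (m+1) (Fin.snoc g.1 k) := by
    ext ω
    constructor
    · rintro ⟨h1, h2⟩
      refine Set.mem_iUnion.mpr ⟨⟨fun i => B (r + i.val) ω, ?_⟩, ?_⟩
      · show B (r + (Fin.last m).val) ω = j
        simpa using h1
      · intro i
        refine Fin.lastCases ?_ ?_ i
        · rw [Fin.snoc_last]
          show B (r + (Fin.last (m+1)).val) ω = k
          simpa [Nat.add_assoc] using h2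
        · intro i'
          rw [Fin.snoc_castSucc]
          rfl
    · intro h
      obtain ⟨g, hg⟩ := Set.mem_iUnion.mp h
      constructor
      · have := hg (Fin.castSucc (Fin.last m))
        rw [Fin.snoc_castSucc] at this
        show B (r+m) ω = j
        simp only [Fin.coe_castSucc, Fin.val_last] at this
        rw [this, g.2]
      · have := hg (Fin.last (m+1))
        rw [Fin.snoc_last] at this
        show B (r+m+1) ω = k
        simpa [Nat.add_assoc] using this
  have hdisj : Pairwise (Function.onFun Disjoint
      (fun g : {g : Fin (m+1) → ℕ // g (Fin.last m) = j} =>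
        Cyl B r (m+1) (Fin.snoc g.1 k))) := by
    intro g g' hne
    rw [Function.onFun, Set.disjoint_left]
    intro ω hω hω'
    apply hne
    apply Subtype.ext
    funext i
    have h1 := hω (Fin.castSucc i)
    have h2 := hω' (Fin.castSucc i)
    rw [Fin.snoc_castSucc] at h1 h2
    rw [← h1, ← h2]
  rw [hset, measure_iUnion hdisj (fun g => Cyl_measurable hmc (m+1) _)]
  rw [ENNReal.tsum_toReal_eq (fun g => measure_ne_top P _)]
  have hterm : ∀ g : {g : Fin (m+1) → ℕ // g (Fin.last m) = j},
      (P (Cyl B r (m+1) (Fin.snoc g.1 k))).toReal = wpath q r m g.1 * q (r+m) j k := by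
    intro g
    rw [Cyl_formula hmc (m+1) _, wpath_snoc, g.2]
  rw [tsum_congr hterm, tsum_mul_right, ← marg_eq_tsum hmc m j]

lemma marg_eq_Wt {μ : ℝ} (hmc : IsMC P q r 1 B) (hb : Bundle q r μ) (hr : 2 ≤ r) :
    ∀ m k, (P {ω | B (r+m) ω = k}).toReal = Wt q r m k := by
  intro m
  induction m with
  | zero =>
      intro k
      rw [Wt_zero]
      have : r + 0 = r := rfl
      rw [this]
      exact P_start hmc k
  | succ m ih =>
      intro k
      have hset : {ω | B (r+(m+1)) ω = k}
          = ⋃ j : ℕ, ({ω | B (r+m) ω = j} ∩ {ω | B (r+m+1) ω = k}) := by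
        ext ω
        constructor
        · intro h
          exact Set.mem_iUnion.mpr ⟨B (r+m) ω, rfl, h⟩
        · intro h
          obtain ⟨j, hj⟩ := Set.mem_iUnion.mp h
          exact hj.2
      have hdisj : Pairwise (Function.onFun Disjoint
          (fun j : ℕ => {ω | B (r+m) ω = j} ∩ {ω | B (r+m+1) ω = k})) := by
        intro j j' hne
        rw [Function.onFun, Set.disjoint_left]
        rintro ω ⟨h1, _⟩ ⟨h2, _⟩
        exact hne (h1 ▸ h2 ▸ rfl)
      have hmeas : ∀ j : ℕ, MeasurableSet ({ω | B (r+m) ω = j} ∩ {ω | B (r+m+1) ω = k}) := by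
        intro j
        exact ((hmc.1 (r+m)) (measurableSet_singleton j)).inter
          ((hmc.1 (r+m+1)) (measurableSet_singleton k))
      rw [hset, measure_iUnion hdisj hmeas]
      rw [ENNReal.tsum_toReal_eq (fun j => measure_ne_top P _)]
      have hterm : ∀ j : ℕ,
          (P ({ω | B (r+m) ω = j} ∩ {ω | B (r+m+1) ω = k})).toReal
            = Wt q r m j * q (r+m) j k := by
        intro j
        rw [joint_eq hmc m j k, ih j]
      rw [tsum_congr hterm]
      rw [tsum_eq_sum (s := Finset.range (r+m+1)) ?_]
      · rw [Wt_succ]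
      · intro j hj
        have : r + m < j := by
          have := Finset.mem_range.not.mp hj
          omega
        rw [Wt_supp hb hr m j this, zero_mul]

lemma prob_gt_eq_sum {μ : ℝ} (hmc : IsMC P q r 1 B) (hb : Bundle q r μ) (hr : 2 ≤ r)
    (a : ℝ) (n : ℕ) (hn : r ≤ n) :
    (P {ω | a * n < (B n ω : ℝ)}).toReal
      = ∑ k ∈ Finset.range (n+1), if a * n < (k:ℝ) then Wt q r (n-r) k else 0 := by
  classical
  have hset : {ω | a * n < (B n ω : ℝ)}
      = ⋃ k : ℕ, {ω | B n ω = k ∧ a * n < (k:ℝ)} := by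
    ext ω
    constructor
    · intro h
      exact Set.mem_iUnion.mpr ⟨B n ω, rfl, h⟩
    · intro h
      obtain ⟨k, hk1, hk2⟩ := Set.mem_iUnion.mp h
      show a * n < (B n ω : ℝ)
      rw [hk1]
      exact hk2
  have hTk : ∀ k : ℕ, {ω | B n ω = k ∧ a * n < (k:ℝ)}
      = if a * n < (k:ℝ) then {ω | B n ω = k} else ∅ := by
    intro k
    split_ifs with h
    · ext ω; simp [h]
    · ext ω; simp [h]
  have hdisj : Pairwise (Function.onFun Disjoint
      (fun k : ℕ => {ω | B n ω = k ∧ a * n < (k:ℝ)})) := by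
    intro k k' hne
    rw [Function.onFun, Set.disjoint_left]
    rintro ω ⟨h1, _⟩ ⟨h2, _⟩
    exact hne (h1 ▸ h2 ▸ rfl)
  have hmeas : ∀ k : ℕ, MeasurableSet {ω | B n ω = k ∧ a * n < (k:ℝ)} := by
    intro k
    rw [hTk k]
    split_ifs
    · exact (hmc.1 n) (measurableSet_singleton k)
    · exact MeasurableSet.empty
  rw [hset, measure_iUnion hdisj hmeas]
  rw [ENNReal.tsum_toReal_eq (fun k => measure_ne_top P _)]
  have hterm : ∀ k : ℕ, (P {ω | B n ω = k ∧ a * n < (k:ℝ)}).toReal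
      = if a * n < (k:ℝ) then Wt q r (n-r) k else 0 := by
    intro k
    rw [hTk k]
    split_ifs with h
    · have hn' : r + (n - r) = n := by omega
      have := marg_eq_Wt hmc hb hr (n-r) k
      rw [hn'] at this
      exact this
    · simp
  rw [tsum_congr hterm]
  rw [tsum_eq_sum (s := Finset.range (n+1)) ?_]
  intro k hk
  have hkn : n < k := by
    have := Finset.mem_range.not.mp hk
    omega
  split_ifs
  · apply Wt_supp hb hr
    omega
  · rfl

end Measure
section Sandwich

variable {r : ℕ}

/-- the Beta(r-1,1) density -/
noncomputable def dens (r : ℕ) : ℝ → ℝ := fun x => ((r:ℝ)-1) * x^(r-2)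

lemma dens_cont : Continuous (dens r) := by
  unfold dens; continuity

lemma dens_nonneg (hr : 2 ≤ r) {x : ℝ} (hx : 0 ≤ x) : 0 ≤ dens r x := by
  unfold dens
  have : (2:ℝ) ≤ (r:ℝ) := by exact_mod_cast hr
  have : (0:ℝ) ≤ (r:ℝ)-1 := by linarith
  positivity

lemma integral_dens (hr : 2 ≤ r) (d : ℝ) : ∫ x in (0:ℝ)..d, dens r x = d^(r-1) := by
  unfold dens
  rw [intervalIntegral.integral_const_mul, integral_pow]
  have h1 : r - 2 + 1 = r - 1 := by omega
  have h2 : (0:ℝ)^(r-2+1) = 0 := zero_pow (by omega)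
  rw [h2, h1]
  have h3 : ((r:ℝ)-1) = ((r-2:ℕ):ℝ)+1 := by
    have : ((r-2:ℕ):ℝ) = (r:ℝ) - 2 := by
      have : (2:ℕ) ≤ r := hr
      push_cast [Nat.cast_sub this]
      ring
    rw [this]; ring
  rw [h3]
  have h4 : ((r-2:ℕ):ℝ)+1 > 0 := by positivity
  rw [← h3]
  have h2r : (2:ℝ) ≤ (r:ℝ) := by exact_mod_cast hr
  have h5 : ((r:ℝ)-1) ≠ 0 := by intro h; linarith
  field_simp
  simp

lemma integral_monomial (hr : 2 ≤ r) (i : ℕ) :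
    ∫ x in (0:ℝ)..1, x^i * dens r x = ((r:ℝ)-1)/((r:ℝ)-1+i) := by
  unfold dens
  have hcomm : ∀ x : ℝ, x^i * (((r:ℝ)-1) * x^(r-2)) = ((r:ℝ)-1) * x^(i+(r-2)) := by
    intro x; rw [pow_add]; ring
  rw [intervalIntegral.integral_congr (fun x _ => hcomm x)]
  rw [intervalIntegral.integral_const_mul, integral_pow]
  have h2 : (0:ℝ)^(i+(r-2)+1) = 0 := zero_pow (by omega)
  rw [h2, one_pow]
  have h3 : ((i+(r-2):ℕ):ℝ)+1 = (r:ℝ)-1+i := by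
    have h2r : (2:ℕ) ≤ r := hr
    push_cast [Nat.cast_sub h2r]
    ring
  rw [h3]
  have hpos : (0:ℝ) < (r:ℝ)-1+i := by
    have h2r : (2:ℝ) ≤ (r:ℝ) := by exact_mod_cast hr
    have : (0:ℝ) ≤ (i:ℝ) := by positivity
    linarith
  field_simp
  simp

/-- value of `Ip` for a polynomial -/
lemma integral_poly (hr : 2 ≤ r) (p : Polynomial ℝ) :
    ∫ x in (0:ℝ)..1, p.eval x * dens r x
      = ∑ i ∈ Finset.range (p.natDegree+1), p.coeff i * (((r:ℝ)-1)/((r:ℝ)-1+i)) := by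
  have heval : ∀ x : ℝ, p.eval x * dens r x
      = ∑ i ∈ Finset.range (p.natDegree+1), p.coeff i * (x^i * dens r x) := by
    intro x
    rw [Polynomial.eval_eq_sum_range, Finset.sum_mul]
    apply Finset.sum_congr rfl
    intro i _
    ring
  rw [intervalIntegral.integral_congr (fun x _ => heval x)]
  rw [intervalIntegral.integral_finset_sum]
  · apply Finset.sum_congr rfl
    intro i _
    rw [intervalIntegral.integral_const_mul, integral_monomial hr]
  · intro i _
    apply Continuous.intervalIntegrable
    have := dens_cont (r := r)
    continuity


/-- downward ramp: `1` for `x ≤ c - δ`, `0` for `x ≥ c`. -/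
noncomputable def ramp (c δ : ℝ) : ℝ → ℝ := fun x => max 0 (min 1 ((c - x)/δ))

lemma ramp_cont (c δ : ℝ) : Continuous (ramp c δ) := by
  unfold ramp; fun_prop

lemma ramp_nonneg (c δ x : ℝ) : 0 ≤ ramp c δ x := le_max_left _ _

lemma ramp_le_one (c δ x : ℝ) : ramp c δ x ≤ 1 := by
  unfold ramp
  apply max_le (by norm_num) (min_le_left _ _)

lemma ramp_eq_one (c δ x : ℝ) (hδ : 0 < δ) (hx : x ≤ c - δ) : ramp c δ x = 1 := by
  unfold ramp
  have h1 : (1:ℝ) ≤ (c - x)/δ := by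
    rw [le_div_iff₀ hδ]
    linarith
  rw [min_eq_left h1, max_eq_right (by norm_num)]

lemma ramp_eq_zero (c δ x : ℝ) (hδ : 0 < δ) (hx : c ≤ x) : ramp c δ x = 0 := by
  unfold ramp
  have h1 : (c - x)/δ ≤ 0 := by
    apply div_nonpos_of_nonpos_of_nonneg (by linarith) hδ.le
  rw [max_eq_left]
  exact le_trans (min_le_right _ _) h1

lemma ramp_dens_integrable (hr : 2 ≤ r) (c δ u v : ℝ) :
    IntervalIntegrable (fun x => ramp c δ x * dens r x) MeasureTheory.volume u v :=
  ((ramp_cont c δ).mul (dens_cont)).intervalIntegrable u v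

lemma int_ramp_upper (hr : 2 ≤ r) (c δ : ℝ) (hc0 : 0 < c) (hc1 : c < 1) (hδ : 0 < δ) :
    ∫ x in (0:ℝ)..1, ramp (c+δ) δ x * dens r x ≤ c^(r-1) + ((r:ℝ)-1)*δ := by
  set d := min (c+δ) 1 with hd
  have hd1 : d ≤ 1 := min_le_right _ _
  have hcd : c ≤ d := le_min (by linarith) hc1.le
  have hd0 : (0:ℝ) ≤ d := by linarith
  have hsplit : (∫ x in (0:ℝ)..d, ramp (c+δ) δ x * dens r x)
      + (∫ x in d..(1:ℝ), ramp (c+δ) δ x * dens r x)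
      = ∫ x in (0:ℝ)..1, ramp (c+δ) δ x * dens r x :=
    intervalIntegral.integral_add_adjacent_intervals
      (ramp_dens_integrable hr _ _ _ _) (ramp_dens_integrable hr _ _ _ _)
  have htail : (∫ x in d..(1:ℝ), ramp (c+δ) δ x * dens r x) = 0 := by
    rcases le_or_gt (c+δ) 1 with h | h
    · have hde : d = c+δ := min_eq_left h
      have : EqOn (fun x => ramp (c+δ) δ x * dens r x) (fun _ => (0:ℝ)) (Set.uIcc d 1) := by
        intro x hx
        rw [Set.uIcc_of_le hd1] at hx
        have : c + δ ≤ x := by rw [← hde]; exact hx.1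
        show ramp (c+δ) δ x * dens r x = 0
        rw [ramp_eq_zero _ _ _ hδ this, zero_mul]
      rw [intervalIntegral.integral_congr this]
      simp
    · have hde : d = 1 := min_eq_right h.le
      rw [hde]
      simp
  have hhead : (∫ x in (0:ℝ)..d, ramp (c+δ) δ x * dens r x) ≤ d^(r-1) := by
    rw [← integral_dens hr d]
    apply intervalIntegral.integral_mono_on hd0 (ramp_dens_integrable hr _ _ _ _)
      ((dens_cont).intervalIntegrable _ _)
    intro x hx
    have h1 : ramp (c+δ) δ x ≤ 1 := ramp_le_one _ _ _
    have h2 : 0 ≤ dens r x := dens_nonneg hr hx.1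
    nlinarith [ramp_nonneg (c+δ) δ x]
  have hdc : d^(r-1) ≤ c^(r-1) + ((r:ℝ)-1)*δ := by
    have h := pow_sub_pow_le (r-1) d c hc0.le hcd hd1
    have hdcδ : d - c ≤ δ := by
      have : d ≤ c + δ := min_le_left _ _
      linarith
    have hcast : ((r-1:ℕ):ℝ) = (r:ℝ)-1 := by
      push_cast [Nat.cast_sub (show 1 ≤ r by omega)]
      ring
    rw [hcast] at h
    have h2r : (2:ℝ) ≤ (r:ℝ) := by exact_mod_cast hr
    nlinarith
  linarith

lemma int_ramp_lower (hr : 2 ≤ r) (c δ : ℝ) (hδ : 0 < δ) (hδc : δ < c) (hc1 : c < 1) :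
    c^(r-1) - ((r:ℝ)-1)*δ ≤ ∫ x in (0:ℝ)..1, ramp c δ x * dens r x := by
  have hc0 : (0:ℝ) < c := lt_trans hδ hδc
  have hcd0 : (0:ℝ) ≤ c - δ := by linarith
  have hcd1 : c - δ ≤ 1 := by linarith
  have hsplit : (∫ x in (0:ℝ)..(c-δ), ramp c δ x * dens r x)
      + (∫ x in (c-δ)..(1:ℝ), ramp c δ x * dens r x)
      = ∫ x in (0:ℝ)..1, ramp c δ x * dens r x :=
    intervalIntegral.integral_add_adjacent_intervals
      (ramp_dens_integrable hr _ _ _ _) (ramp_dens_integrable hr _ _ _ _)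
  have htail : 0 ≤ ∫ x in (c-δ)..(1:ℝ), ramp c δ x * dens r x := by
    apply intervalIntegral.integral_nonneg hcd1
    intro x hx
    exact mul_nonneg (ramp_nonneg _ _ _) (dens_nonneg hr (by linarith [hx.1]))
  have hhead : (∫ x in (0:ℝ)..(c-δ), ramp c δ x * dens r x) = (c-δ)^(r-1) := by
    rw [← integral_dens hr (c-δ)]
    apply intervalIntegral.integral_congr
    intro x hx
    rw [Set.uIcc_of_le hcd0] at hx
    show ramp c δ x * dens r x = dens r x
    rw [ramp_eq_one _ _ _ hδ hx.2, one_mul]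
  have hlow : c^(r-1) - ((r:ℝ)-1)*δ ≤ (c-δ)^(r-1) := by
    have h := pow_sub_pow_le (r-1) c (c-δ) (by linarith) (by linarith) hc1.le
    have hcast : ((r-1:ℕ):ℝ) = (r:ℝ)-1 := by
      push_cast [Nat.cast_sub (show 1 ≤ r by omega)]
      ring
    rw [hcast] at h
    have h2r : (2:ℝ) ≤ (r:ℝ) := by exact_mod_cast hr
    nlinarith
  linarith

/-- convergence of polynomial statistics from moment convergence -/
lemma Ep_tendsto (hr : 2 ≤ r) (w : ℕ → ℕ → ℝ)
    (hmom : ∀ M : ℕ, Tendsto (fun n => ∑ k ∈ Finset.range (n+1), w n k * (((n:ℝ)-k)/n)^M)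
      atTop (nhds (((r:ℝ)-1)/((r:ℝ)-1+M)))) (p : Polynomial ℝ) :
    Tendsto (fun n => ∑ k ∈ Finset.range (n+1), w n k * p.eval (((n:ℝ)-k)/n)) atTop
      (nhds (∑ i ∈ Finset.range (p.natDegree+1), p.coeff i * (((r:ℝ)-1)/((r:ℝ)-1+i)))) := by
  have heq : ∀ n : ℕ, ∑ k ∈ Finset.range (n+1), w n k * p.eval (((n:ℝ)-k)/n)
      = ∑ i ∈ Finset.range (p.natDegree+1),
          p.coeff i * (∑ k ∈ Finset.range (n+1), w n k * (((n:ℝ)-k)/n)^i) := by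
    intro n
    have h1 : ∀ k, w n k * p.eval (((n:ℝ)-k)/n)
        = ∑ i ∈ Finset.range (p.natDegree+1), p.coeff i * (w n k * (((n:ℝ)-k)/n)^i) := by
      intro k
      rw [Polynomial.eval_eq_sum_range, Finset.mul_sum]
      apply Finset.sum_congr rfl
      intro i _
      ring
    rw [Finset.sum_congr rfl (fun k _ => h1 k), Finset.sum_comm]
    apply Finset.sum_congr rfl
    intro i _
    rw [Finset.mul_sum]
  simp only [heq]
  apply tendsto_finset_sum
  intro i _
  exact (hmom i).const_mul (p.coeff i)


set_option maxHeartbeats 2000000 in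
lemma sandwich (hr : 2 ≤ r) (a : ℝ) (ha : a ∈ Set.Ioo (0:ℝ) 1) (w : ℕ → ℕ → ℝ)
    (hnn : ∀ n, r ≤ n → ∀ k, 0 ≤ w n k)
    (hsum1 : ∀ n, r ≤ n → ∑ k ∈ Finset.range (n+1), w n k = 1)
    (hmom : ∀ M : ℕ, Tendsto (fun n => ∑ k ∈ Finset.range (n+1), w n k * (((n:ℝ)-k)/n)^M)
      atTop (nhds (((r:ℝ)-1)/((r:ℝ)-1+M)))) :
    Tendsto (fun n => ∑ k ∈ Finset.range (n+1), if a*n < (k:ℝ) then w n k else 0) atTop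
      (nhds ((1-a)^(r-1))) := by
  obtain ⟨ha0, ha1⟩ := ha
  set c : ℝ := 1 - a with hc
  have hc0 : 0 < c := by simp [hc]; linarith
  have hc1 : c < 1 := by simp [hc]; linarith
  have h2r : (2:ℝ) ≤ (r:ℝ) := by exact_mod_cast hr
  rw [Metric.tendsto_atTop]
  intro ε hε
  set δ : ℝ := min (ε/(8*r)) (c/2) with hδdef
  have hδ0 : 0 < δ := by
    apply lt_min
    · positivity
    · linarith
  have hδc : δ < c := by
    calc δ ≤ c/2 := min_le_right _ _
      _ < c := by linarith
  have hδr : ((r:ℝ)-1)*δ ≤ ε/8 := by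
    have h1 : δ ≤ ε/(8*r) := min_le_left _ _
    have h2 : ((r:ℝ)-1)*δ ≤ ((r:ℝ)-1)*(ε/(8*r)) := by
      apply mul_le_mul_of_nonneg_left h1 (by linarith)
    calc ((r:ℝ)-1)*δ ≤ ((r:ℝ)-1)*(ε/(8*r)) := h2
      _ ≤ ε/8 := by
          have hrpos : (0:ℝ) < (r:ℝ) := by linarith
          rw [← sub_nonneg]
          have heq : ε/8 - ((r:ℝ)-1)*(ε/(8*r)) = ε/(8*r) := by
            field_simp
            ring
          rw [heq]
          positivity
  -- polynomials approximating the two ramps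
  obtain ⟨pp, hpp⟩ := exists_polynomial_near_of_continuousOn 0 1 (ramp (c+δ) δ)
    ((ramp_cont (c+δ) δ).continuousOn) (ε/8) (by positivity)
  obtain ⟨pm, hpm⟩ := exists_polynomial_near_of_continuousOn 0 1 (ramp c δ)
    ((ramp_cont c δ).continuousOn) (ε/8) (by positivity)
  set Ipp : ℝ := ∑ i ∈ Finset.range (pp.natDegree+1), pp.coeff i * (((r:ℝ)-1)/((r:ℝ)-1+i))
    with hIppdef
  set Ipm : ℝ := ∑ i ∈ Finset.range (pm.natDegree+1), pm.coeff i * (((r:ℝ)-1)/((r:ℝ)-1+i))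
    with hIpmdef
  have hdens1 : ∫ x in (0:ℝ)..1, dens r x = 1 := by
    rw [integral_dens hr 1, one_pow]
  -- upper bound for Ipp
  have hIpp : Ipp ≤ c^(r-1) + ε/4 := by
    rw [hIppdef, ← integral_poly hr pp]
    have hmono : (∫ x in (0:ℝ)..1, pp.eval x * dens r x)
        ≤ ∫ x in (0:ℝ)..1, (ramp (c+δ) δ x + ε/8) * dens r x := by
      apply intervalIntegral.integral_mono_on (by norm_num)
        ((pp.continuous_aeval.mul dens_cont).intervalIntegrable _ _)
        ((((ramp_cont (c+δ) δ).add continuous_const).mul dens_cont).intervalIntegrable _ _)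
      intro x hx
      have h1 := hpp x hx
      have h2 : 0 ≤ dens r x := dens_nonneg hr hx.1
      have h3 : pp.eval x ≤ ramp (c+δ) δ x + ε/8 := by
        have := abs_lt.mp h1
        linarith [this.2]
      exact mul_le_mul_of_nonneg_right h3 h2
    have hsplit : (∫ x in (0:ℝ)..1, (ramp (c+δ) δ x + ε/8) * dens r x)
        = (∫ x in (0:ℝ)..1, ramp (c+δ) δ x * dens r x) + ε/8 := by
      have : ∀ x : ℝ, (ramp (c+δ) δ x + ε/8) * dens r x
          = ramp (c+δ) δ x * dens r x + (ε/8) * dens r x := by intro x; ring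
      rw [intervalIntegral.integral_congr (fun x _ => this x)]
      rw [intervalIntegral.integral_add (g := fun x => (ε/8) * dens r x) (ramp_dens_integrable hr _ _ _ _)
        ((continuous_const.mul dens_cont).intervalIntegrable _ _)]
      rw [intervalIntegral.integral_const_mul, hdens1, mul_one]
    have hup := int_ramp_upper hr c δ hc0 hc1 hδ0
    have heval : Polynomial.eval = fun (x : ℝ) (p : Polynomial ℝ) => p.eval x := rfl
    calc (∫ x in (0:ℝ)..1, pp.eval x * dens r x)
        ≤ (∫ x in (0:ℝ)..1, ramp (c+δ) δ x * dens r x) + ε/8 := by rw [← hsplit]; exact hmono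
      _ ≤ c^(r-1) + ((r:ℝ)-1)*δ + ε/8 := by linarith
      _ ≤ c^(r-1) + ε/4 := by linarith
  -- lower bound for Ipm
  have hIpm : c^(r-1) - ε/4 ≤ Ipm := by
    rw [hIpmdef, ← integral_poly hr pm]
    have hmono : (∫ x in (0:ℝ)..1, (ramp c δ x - ε/8) * dens r x)
        ≤ ∫ x in (0:ℝ)..1, pm.eval x * dens r x := by
      apply intervalIntegral.integral_mono_on (by norm_num)
        ((((ramp_cont c δ).sub continuous_const).mul dens_cont).intervalIntegrable _ _)
        ((pm.continuous_aeval.mul dens_cont).intervalIntegrable _ _)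
      intro x hx
      have h1 := hpm x hx
      have h2 : 0 ≤ dens r x := dens_nonneg hr hx.1
      have h3 : ramp c δ x - ε/8 ≤ pm.eval x := by
        have := abs_lt.mp h1
        linarith [this.1]
      exact mul_le_mul_of_nonneg_right h3 h2
    have hsplit : (∫ x in (0:ℝ)..1, (ramp c δ x - ε/8) * dens r x)
        = (∫ x in (0:ℝ)..1, ramp c δ x * dens r x) - ε/8 := by
      have : ∀ x : ℝ, (ramp c δ x - ε/8) * dens r x
          = ramp c δ x * dens r x - (ε/8) * dens r x := by intro x; ring
      rw [intervalIntegral.integral_congr (fun x _ => this x)]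
      rw [intervalIntegral.integral_sub (g := fun x => (ε/8) * dens r x) (ramp_dens_integrable hr _ _ _ _)
        ((continuous_const.mul dens_cont).intervalIntegrable _ _)]
      rw [intervalIntegral.integral_const_mul, hdens1, mul_one]
    have hlo := int_ramp_lower hr c δ hδ0 hδc hc1
    calc c^(r-1) - ε/4 ≤ c^(r-1) - ((r:ℝ)-1)*δ - ε/8 := by linarith
      _ ≤ (∫ x in (0:ℝ)..1, ramp c δ x * dens r x) - ε/8 := by linarith
      _ = ∫ x in (0:ℝ)..1, (ramp c δ x - ε/8) * dens r x := hsplit.symm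
      _ ≤ _ := hmono
  -- convergence of the polynomial statistics
  have hEpp := Ep_tendsto hr w hmom pp
  have hEpm := Ep_tendsto hr w hmom pm
  rw [Metric.tendsto_atTop] at hEpp hEpm
  obtain ⟨N1, hN1⟩ := hEpp (ε/8) (by positivity)
  obtain ⟨N2, hN2⟩ := hEpm (ε/8) (by positivity)
  refine ⟨max (max N1 N2) (max r 1), ?_⟩
  intro n hn
  have hnr : r ≤ n := le_trans (le_max_left r 1) (le_trans (le_max_right _ _) hn)
  have hn1 : 1 ≤ n := le_trans (le_max_right r 1) (le_trans (le_max_right _ _) hn)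
  have hnn' := hnn n hnr
  have hnpos : (0:ℝ) < (n:ℝ) := by exact_mod_cast hn1
  -- pointwise facts about x_k
  have hxk : ∀ k ∈ Finset.range (n+1), 0 ≤ ((n:ℝ)-k)/n ∧ ((n:ℝ)-k)/n ≤ 1 := by
    intro k hk
    have hkn : (k:ℝ) ≤ (n:ℝ) := by
      have := Finset.mem_range.mp hk
      exact_mod_cast Nat.lt_succ_iff.mp this
    constructor
    · apply div_nonneg (by linarith) hnpos.le
    · rw [div_le_one hnpos]
      have : (0:ℝ) ≤ (k:ℝ) := by positivity
      linarith
  -- upper estimate of S n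
  have hSup : (∑ k ∈ Finset.range (n+1), if a*n < (k:ℝ) then w n k else 0)
      ≤ (∑ k ∈ Finset.range (n+1), w n k * pp.eval (((n:ℝ)-k)/n)) + ε/8 := by
    have h1 : (∑ k ∈ Finset.range (n+1), if a*n < (k:ℝ) then w n k else 0)
        ≤ ∑ k ∈ Finset.range (n+1), w n k * ramp (c+δ) δ (((n:ℝ)-k)/n) := by
      apply Finset.sum_le_sum
      intro k hk
      obtain ⟨hx0, hx1⟩ := hxk k hk
      split_ifs with h
      · have hxc : ((n:ℝ)-k)/n ≤ c := by
          rw [div_le_iff₀ hnpos]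
          have : c*n = (1-a)*n := by rw [hc]
          nlinarith
        rw [ramp_eq_one (c+δ) δ _ hδ0 (by linarith)]
        rw [mul_one]
      · exact mul_nonneg (hnn' k) (ramp_nonneg _ _ _)
    have h2 : (∑ k ∈ Finset.range (n+1), w n k * ramp (c+δ) δ (((n:ℝ)-k)/n))
        ≤ ∑ k ∈ Finset.range (n+1), w n k * (pp.eval (((n:ℝ)-k)/n) + ε/8) := by
      apply Finset.sum_le_sum
      intro k hk
      obtain ⟨hx0, hx1⟩ := hxk k hk
      apply mul_le_mul_of_nonneg_left _ (hnn' k)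
      have := abs_lt.mp (hpp _ ⟨hx0, hx1⟩)
      linarith [this.1]
    have h3 : (∑ k ∈ Finset.range (n+1), w n k * (pp.eval (((n:ℝ)-k)/n) + ε/8))
        = (∑ k ∈ Finset.range (n+1), w n k * pp.eval (((n:ℝ)-k)/n)) + ε/8 := by
      have : ∀ k ∈ Finset.range (n+1), w n k * (pp.eval (((n:ℝ)-k)/n) + ε/8)
          = w n k * pp.eval (((n:ℝ)-k)/n) + w n k * (ε/8) := by
        intro k _; ring
      rw [Finset.sum_congr rfl this, Finset.sum_add_distrib, ← Finset.sum_mul,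
        hsum1 n hnr, one_mul]
    linarith
  -- lower estimate of S n
  have hSlo : (∑ k ∈ Finset.range (n+1), w n k * pm.eval (((n:ℝ)-k)/n)) - ε/8
      ≤ ∑ k ∈ Finset.range (n+1), if a*n < (k:ℝ) then w n k else 0 := by
    have h1 : (∑ k ∈ Finset.range (n+1), w n k * ramp c δ (((n:ℝ)-k)/n))
        ≤ ∑ k ∈ Finset.range (n+1), if a*n < (k:ℝ) then w n k else 0 := by
      apply Finset.sum_le_sum
      intro k hk
      obtain ⟨hx0, hx1⟩ := hxk k hk
      split_ifs with h
      · calc w n k * ramp c δ (((n:ℝ)-k)/n) ≤ w n k * 1 :=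
              mul_le_mul_of_nonneg_left (ramp_le_one _ _ _) (hnn' k)
          _ = w n k := mul_one _
      · have hxc : c ≤ ((n:ℝ)-k)/n := by
          rw [le_div_iff₀ hnpos]
          push_neg at h
          have : c*n = (1-a)*n := by rw [hc]
          nlinarith
        rw [ramp_eq_zero c δ _ hδ0 hxc, mul_zero]
    have h2 : (∑ k ∈ Finset.range (n+1), w n k * (pm.eval (((n:ℝ)-k)/n) - ε/8))
        ≤ ∑ k ∈ Finset.range (n+1), w n k * ramp c δ (((n:ℝ)-k)/n) := by
      apply Finset.sum_le_sum
      intro k hk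
      obtain ⟨hx0, hx1⟩ := hxk k hk
      apply mul_le_mul_of_nonneg_left _ (hnn' k)
      have := abs_lt.mp (hpm _ ⟨hx0, hx1⟩)
      linarith [this.2]
    have h3 : (∑ k ∈ Finset.range (n+1), w n k * (pm.eval (((n:ℝ)-k)/n) - ε/8))
        = (∑ k ∈ Finset.range (n+1), w n k * pm.eval (((n:ℝ)-k)/n)) - ε/8 := by
      have : ∀ k ∈ Finset.range (n+1), w n k * (pm.eval (((n:ℝ)-k)/n) - ε/8)
          = w n k * pm.eval (((n:ℝ)-k)/n) - w n k * (ε/8) := by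
        intro k _; ring
      rw [Finset.sum_congr rfl this, Finset.sum_sub_distrib, ← Finset.sum_mul,
        hsum1 n hnr, one_mul]
    linarith
  -- assemble
  have hd1 := hN1 n (le_trans (le_trans (le_max_left N1 N2) (le_max_left _ _)) hn)
  have hd2 := hN2 n (le_trans (le_trans (le_max_right N1 N2) (le_max_left _ _)) hn)
  rw [Real.dist_eq] at hd1 hd2 ⊢
  have ha1' := abs_lt.mp hd1
  have ha2' := abs_lt.mp hd2
  rw [abs_lt]
  constructor
  · -- lower
    have : c^(r-1) - ε/2 ≤ ∑ k ∈ Finset.range (n+1), if a*n < (k:ℝ) then w n k else 0 := by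
      have hE : Ipm - ε/8 ≤ ∑ k ∈ Finset.range (n+1), w n k * pm.eval (((n:ℝ)-k)/n) := by
        linarith [ha2'.1]
      linarith
    rw [hc] at this
    linarith
  · have : (∑ k ∈ Finset.range (n+1), if a*n < (k:ℝ) then w n k else 0) ≤ c^(r-1) + ε/2 := by
      have hE : (∑ k ∈ Finset.range (n+1), w n k * pp.eval (((n:ℝ)-k)/n)) ≤ Ipp + ε/8 := by
        linarith [ha1'.2]
      linarith
    rw [hc] at this
    linarith

end Sandwich
/-- `(x+c)^k - x^k ≤ k c (x+c)^(k-1)` for nonnegative `x, c`. -/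
lemma pow_add_sub_pow_le (k : ℕ) (x c : ℝ) (hx : 0 ≤ x) (hc : 0 ≤ c) :
    (x+c)^k - x^k ≤ k*c*(x+c)^(k-1) := by
  induction k with
  | zero => simp
  | succ k ih =>
      have hxc : 0 ≤ x + c := by linarith
      have h1 : x^k ≤ (x+c)^k := pow_le_pow_left₀ hx (by linarith) k
      rcases Nat.eq_zero_or_pos k with hk | hk
      · subst hk; norm_num
      · have hk1 : k - 1 + 1 = k := by omega
        have h2 : (x+c)^(k-1) * (x+c) = (x+c)^k := by
          rw [← pow_succ, hk1]
        have key : (x+c)^(k+1) - x^(k+1)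
            = (x+c)*((x+c)^k - x^k) + c*x^k := by ring
        rw [key]
        have h3 : (x+c)*((x+c)^k - x^k) ≤ (x+c)*((k:ℝ)*c*(x+c)^(k-1)) := by
          apply mul_le_mul_of_nonneg_left ih hxc
        have h4 : (x+c)*((k:ℝ)*c*(x+c)^(k-1)) = (k:ℝ)*c*(x+c)^k := by
          rw [← h2]; ring
        have h5 : c*x^k ≤ c*(x+c)^k := mul_le_mul_of_nonneg_left h1 hc
        have h6 : ((k:ℕ)+1:ℕ) - 1 = k := by omega
        rw [h6]
        push_cast
        nlinarith
/-- shifted harmonic bound -/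
lemma shift_harm (r m : ℕ) : ∑ i ∈ Finset.range m, (1:ℝ)/((r:ℝ)+i+1)
    ≤ 2 * Real.sqrt (r+m) := by
  have h1 : ∑ i ∈ Finset.range m, (1:ℝ)/((r:ℝ)+i+1)
      ≤ ∑ s ∈ Finset.range (r+m), (1:ℝ)/((s:ℝ)+1) := by
    induction m with
    | zero =>
        simp only [Finset.range_zero, Finset.sum_empty]
        exact Finset.sum_nonneg fun s _ => by positivity
    | succ m ih =>
        rw [Finset.sum_range_succ, show r + (m+1) = (r+m)+1 by omega, Finset.sum_range_succ]
        have : (1:ℝ)/((r:ℝ)+m+1) = 1/(((r+m:ℕ):ℝ)+1) := by push_cast; ring_nf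
        rw [this]
        gcongr
  refine le_trans h1 ?_
  have := harmonic_le_sqrt (r+m)
  convert this using 2
  · rfl
  push_cast
  ring
lemma sqrt_nat_atTop : Tendsto (fun n : ℕ => Real.sqrt n) atTop atTop := by
  rw [tendsto_atTop]
  intro b
  filter_upwards [eventually_ge_atTop (Nat.ceil (b^2) + 1)] with n hn
  have h1 : (b^2 : ℝ) ≤ (n:ℝ) := by
    calc (b^2:ℝ) ≤ (Nat.ceil (b^2) : ℝ) := Nat.le_ceil _
      _ ≤ (n:ℝ) := by exact_mod_cast le_trans (by omega) hn
  rcases le_or_gt b 0 with hb | hb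
  · exact le_trans hb (Real.sqrt_nonneg _)
  · calc b = Real.sqrt (b^2) := by rw [Real.sqrt_sq hb.le]
      _ ≤ Real.sqrt n := Real.sqrt_le_sqrt h1

lemma mu_sqrt_tendsto (θ : ℝ) (μ : ℕ → ℝ)
    (hlim : Tendsto (fun n : ℕ => (n : ℝ) * μ n) atTop (nhds θ)) :
    Tendsto (fun n : ℕ => μ n * Real.sqrt n) atTop (nhds 0) := by
  have hinv : Tendsto (fun n : ℕ => (Real.sqrt n)⁻¹) atTop (nhds 0) :=
    sqrt_nat_atTop.inv_tendsto_atTop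
  have hmul := hlim.mul hinv
  rw [mul_zero] at hmul
  apply hmul.congr'
  filter_upwards [eventually_ge_atTop 1] with n hn
  have hnpos : (0:ℝ) < (n:ℝ) := by exact_mod_cast hn
  have hs : Real.sqrt n ≠ 0 := by
    apply ne_of_gt
    apply Real.sqrt_pos.mpr hnpos
  have hss : Real.sqrt (n:ℝ) * Real.sqrt (n:ℝ) = (n:ℝ) := Real.mul_self_sqrt hnpos.le
  field_simp
  linear_combination (-(μ n)) * hss

lemma mom_tendsto (r : ℕ) (hr : 2 ≤ r) (θ : ℝ) (μ : ℕ → ℝ)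
    (hμ : ∀ n, μ n ∈ Set.Ioo (0:ℝ) 1)
    (hlim : Tendsto (fun n : ℕ => (n : ℝ) * μ n) atTop (nhds θ))
    (q : ℕ → ℕ → ℕ → ℕ → ℝ) (hb : ∀ n, Bundle (q n) r (μ n)) (M : ℕ) :
    Tendsto (fun n => ∑ k ∈ Finset.range (n+1), Wt (q n) r (n-r) k * (((n:ℝ)-k)/n)^M)
      atTop (nhds (((r:ℝ)-1)/((r:ℝ)-1+M))) := by
  have h2r : (2:ℝ) ≤ (r:ℝ) := by exact_mod_cast hr
  rcases Nat.eq_zero_or_pos M with hM0 | hM1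
  · -- M = 0
    subst hM0
    have htarget : ((r:ℝ)-1)/((r:ℝ)-1+(0:ℕ)) = 1 := by
      push_cast
      rw [add_zero]
      apply div_self
      intro h; linarith
    rw [htarget]
    apply Tendsto.congr' _ tendsto_const_nhds
    filter_upwards [eventually_ge_atTop r] with n hn
    have hidx : r + (n-r) + 1 = n + 1 := by omega
    have := Wt_sum (hb n) hr (n-r)
    rw [hidx] at this
    symm
    calc ∑ k ∈ Finset.range (n+1), Wt (q n) r (n-r) k * (((n:ℝ)-k)/n)^0
        = ∑ k ∈ Finset.range (n+1), Wt (q n) r (n-r) k := by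
          apply Finset.sum_congr rfl
          intro k _
          rw [pow_zero, mul_one]
      _ = 1 := this
  · have hM : 1 ≤ M := hM1
    set L : ℝ := Rf (r-1) M / Rf r M with hLdef
    set C : ℝ := 5*M*(M+2)^(M-1) with hCdef
    have hC0 : 0 ≤ C := by positivity
    -- Step A: uniform bound on the normalized moments
    have hVb : ∀ n, r ≤ n →
        |Vt (q n) r M (n-r) / Rf n M - L| ≤ C * 2 * (μ n * Real.sqrt n) := by
      intro n hn
      have h := Vt_close (hb n) hr (hμ n).1.le M hM (n-r)
      have hidx : r + (n-r) = n := by omega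
      rw [hidx] at h
      refine le_trans h ?_
      have hcong : ∀ i ∈ Finset.range (n-r),
          5*(M:ℝ)*((M:ℝ)+2)^(M-1)*(μ n)/((r:ℝ)+i+1) = (C * μ n) * (1/((r:ℝ)+i+1)) := by
        intro i _
        rw [hCdef]
        ring
      rw [Finset.sum_congr rfl hcong, ← Finset.mul_sum]
      have hH := shift_harm r (n-r)
      have hcast : (r:ℝ) + ((n-r:ℕ):ℝ) = (n:ℝ) := by exact_mod_cast congrArg (Nat.cast (R := ℝ)) hidx
      rw [hcast] at hH
      have hμn : 0 ≤ μ n := (hμ n).1.le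
      calc (C * μ n) * (∑ i ∈ Finset.range (n-r), 1/((r:ℝ)+i+1))
          ≤ (C * μ n) * (2 * Real.sqrt n) := by
            apply mul_le_mul_of_nonneg_left hH (by positivity)
        _ = C * 2 * (μ n * Real.sqrt n) := by ring
    -- Step B
    have hB : Tendsto (fun n : ℕ => C * 2 * (μ n * Real.sqrt n)) atTop (nhds 0) := by
      have := (mu_sqrt_tendsto θ μ hlim).const_mul (C*2)
      rw [mul_zero] at this
      exact this
    -- Step C
    have hX : Tendsto (fun n => Vt (q n) r M (n-r) / Rf n M) atTop (nhds L) := by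
      have h0 : Tendsto (fun n => Vt (q n) r M (n-r) / Rf n M - L) atTop (nhds 0) := by
        apply squeeze_zero_norm' _ hB
        filter_upwards [eventually_ge_atTop r] with n hn
        rw [Real.norm_eq_abs]
        exact hVb n hn
      have := h0.add_const L
      simpa using this
    -- Step D
    have hRf : Tendsto (fun n : ℕ => Rf n M / (n:ℝ)^M) atTop (nhds 1) := by
      have hupT : Tendsto (fun n : ℕ => ((1:ℝ) + (M:ℝ)/n)^M) atTop (nhds 1) := by
        have h1 : Tendsto (fun n : ℕ => (1:ℝ) + (M:ℝ)/n) atTop (nhds 1) := by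
          have := (tendsto_const_div_atTop_nhds_zero_nat (M:ℝ)).const_add 1
          rw [add_zero] at this
          exact this
        have := h1.pow M
        rw [one_pow] at this
        exact this
      apply tendsto_of_tendsto_of_tendsto_of_le_of_le' tendsto_const_nhds hupT
      · filter_upwards [eventually_ge_atTop 1] with n hn
        have hnpos : (0:ℝ) < (n:ℝ) := by exact_mod_cast hn
        rw [le_div_iff₀ (by positivity), one_mul]
        exact Rf_lb n M
      · filter_upwards [eventually_ge_atTop 1] with n hn
        have hnpos : (0:ℝ) < (n:ℝ) := by exact_mod_cast hn
        rw [div_le_iff₀ (by positivity)]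
        have h1 : ((1:ℝ) + (M:ℝ)/n)^M * (n:ℝ)^M = ((n:ℝ)+M)^M := by
          rw [← mul_pow]
          congr 1
          field_simp
        rw [h1]
        exact Rf_ub n M
    -- Step E
    have hVn : Tendsto (fun n => Vt (q n) r M (n-r) / (n:ℝ)^M) atTop (nhds L) := by
      have := hX.mul hRf
      rw [mul_one] at this
      apply this.congr'
      filter_upwards [eventually_ge_atTop 1] with n hn
      have hRfpos : 0 < Rf n M := Rf_pos n M hn
      field_simp
    -- Step F
    have hdiffb : ∀ n, max r 1 ≤ n →
        |(∑ k ∈ Finset.range (n+1), Wt (q n) r (n-r) k * (((n:ℝ)-k)/n)^M)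
          - Vt (q n) r M (n-r) / (n:ℝ)^M|
        ≤ ((M:ℝ)^2*((M:ℝ)+1)^(M-1))/n := by
      intro n hn
      have hnr : r ≤ n := le_trans (le_max_left _ _) hn
      have hn1 : 1 ≤ n := le_trans (le_max_right _ _) hn
      have hnpos : (0:ℝ) < (n:ℝ) := by exact_mod_cast hn1
      have hidx : r + (n-r) + 1 = n + 1 := by omega
      have hidx2 : r + (n-r) = n := by omega
      have hVdef : Vt (q n) r M (n-r) / (n:ℝ)^M
          = ∑ k ∈ Finset.range (n+1), Wt (q n) r (n-r) k * (Rf (n-k) M / (n:ℝ)^M) := by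
        unfold Vt
        rw [hidx]
        rw [Finset.sum_div]
        apply Finset.sum_congr rfl
        intro k _
        rw [hidx2]
        ring
      rw [hVdef, ← Finset.sum_sub_distrib]
      have hterm : ∀ k ∈ Finset.range (n+1),
          Wt (q n) r (n-r) k * (((n:ℝ)-k)/n)^M
            - Wt (q n) r (n-r) k * (Rf (n-k) M / (n:ℝ)^M)
          = Wt (q n) r (n-r) k * ((((n-k:ℕ):ℝ)^M - Rf (n-k) M) / (n:ℝ)^M) := by
        intro k hk
        have hkn : k ≤ n := by
          have := Finset.mem_range.mp hk; omega
        have hcast : ((n:ℝ) - k) = ((n-k:ℕ):ℝ) := by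
          push_cast [Nat.cast_sub hkn]
          ring
        rw [hcast, div_pow]
        ring
      rw [Finset.sum_congr rfl hterm]
      have hW := Wt_nonneg (hb n) hr (n-r)
      have hWsum := Wt_sum (hb n) hr (n-r)
      rw [hidx] at hWsum
      calc |∑ k ∈ Finset.range (n+1),
              Wt (q n) r (n-r) k * ((((n-k:ℕ):ℝ)^M - Rf (n-k) M) / (n:ℝ)^M)|
          ≤ ∑ k ∈ Finset.range (n+1),
              |Wt (q n) r (n-r) k * ((((n-k:ℕ):ℝ)^M - Rf (n-k) M) / (n:ℝ)^M)| :=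
            Finset.abs_sum_le_sum_abs _ _
        _ ≤ ∑ k ∈ Finset.range (n+1),
              Wt (q n) r (n-r) k * (((M:ℝ)^2*((M:ℝ)+1)^(M-1))/n) := by
            apply Finset.sum_le_sum
            intro k hk
            have hkn : k ≤ n := by have := Finset.mem_range.mp hk; omega
            rw [abs_mul, abs_of_nonneg (hW k)]
            apply mul_le_mul_of_nonneg_left _ (hW k)
            set v := n - k with hv
            have hvn : v ≤ n := by omega
            have hvr : (v:ℝ) ≤ (n:ℝ) := by exact_mod_cast hvn
            have h1 : 0 ≤ Rf v M - ((v:ℕ):ℝ)^M := by linarith [Rf_lb v M]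
            have h2 : Rf v M - ((v:ℕ):ℝ)^M ≤ (M:ℝ)*(M:ℝ)*(((v:ℝ))+M)^(M-1) := by
              have h3 := Rf_ub v M
              have h4 := pow_add_sub_pow_le M ((v:ℕ):ℝ) (M:ℝ) (by positivity) (by positivity)
              linarith
            have h5 : (((v:ℝ))+M)^(M-1) ≤ (((M:ℝ)+1)*(n:ℝ))^(M-1) := by
              apply pow_le_pow_left₀ (by positivity)
              have hn1' : (1:ℝ) ≤ (n:ℝ) := by exact_mod_cast hn1
              have hM' : (0:ℝ) ≤ (M:ℝ) := by positivity
              nlinarith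
            have habs : |((((v:ℕ):ℝ))^M - Rf v M) / (n:ℝ)^M|
                = (Rf v M - ((v:ℕ):ℝ)^M) / (n:ℝ)^M := by
              rw [abs_div, abs_of_pos (by positivity : (0:ℝ) < (n:ℝ)^M)]
              congr 1
              rw [abs_sub_comm, abs_of_nonneg h1]
            rw [habs]
            rw [div_le_div_iff₀ (by positivity) hnpos]
            have h6 : (((M:ℝ)+1)*(n:ℝ))^(M-1) = ((M:ℝ)+1)^(M-1) * (n:ℝ)^(M-1) := by
              rw [mul_pow]
            have h7 : (n:ℝ)^(M-1) * (n:ℝ) = (n:ℝ)^M := by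
              rw [← pow_succ]
              congr 1
              omega
            calc (Rf v M - ((v:ℕ):ℝ)^M) * (n:ℝ)
                ≤ ((M:ℝ)*(M:ℝ)*(((M:ℝ)+1)*(n:ℝ))^(M-1)) * (n:ℝ) := by
                  have : (M:ℝ)*(M:ℝ)*(((v:ℝ))+M)^(M-1)
                      ≤ (M:ℝ)*(M:ℝ)*(((M:ℝ)+1)*(n:ℝ))^(M-1) := by
                    apply mul_le_mul_of_nonneg_left h5 (by positivity)
                  nlinarith
              _ = (M:ℝ)^2*((M:ℝ)+1)^(M-1) * ((n:ℝ)^(M-1) * (n:ℝ)) := by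
                  rw [h6]; ring
              _ = (M:ℝ)^2*((M:ℝ)+1)^(M-1) * (n:ℝ)^M := by rw [h7]
        _ = ((M:ℝ)^2*((M:ℝ)+1)^(M-1))/n := by
            rw [← Finset.sum_mul, hWsum, one_mul]
    have hF : Tendsto (fun n =>
        (∑ k ∈ Finset.range (n+1), Wt (q n) r (n-r) k * (((n:ℝ)-k)/n)^M)
          - Vt (q n) r M (n-r) / (n:ℝ)^M) atTop (nhds 0) := by
      apply squeeze_zero_norm' _ (tendsto_const_div_atTop_nhds_zero_nat ((M:ℝ)^2*((M:ℝ)+1)^(M-1)))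
      filter_upwards [eventually_ge_atTop (max r 1)] with n hn
      rw [Real.norm_eq_abs]
      exact hdiffb n hn
    -- Step G
    have hsum := hF.add hVn
    rw [zero_add] at hsum
    have hfinal : L = ((r:ℝ)-1)/((r:ℝ)-1+M) := by
      have hid := Rf_left (r-1) M
      have hr1 : (r-1) + 1 = r := by omega
      rw [hr1] at hid
      have hcast : ((r-1:ℕ):ℝ) = (r:ℝ)-1 := by
        push_cast [Nat.cast_sub (show 1 ≤ r by omega)]
        ring
      rw [hcast] at hid
      have hRfr : 0 < Rf r M := Rf_pos r M (by omega)
      have hden : (0:ℝ) < (r:ℝ)-1+M := by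
        have : (0:ℝ) ≤ (M:ℝ) := by positivity
        linarith
      rw [hLdef]
      rw [div_eq_div_iff hRfr.ne' hden.ne']
      linarith
    rw [← hfinal]
    apply hsum.congr
    intro n
    ring

lemma final (r : ℕ) (hr : 2 ≤ r) (a : ℝ) (ha : a ∈ Set.Ioo (0:ℝ) 1)
    (θ : ℝ) (μ : ℕ → ℝ) (hμ : ∀ n, μ n ∈ Set.Ioo (0:ℝ) 1)
    (hlim : Tendsto (fun n : ℕ => (n : ℝ) * μ n) atTop (nhds θ))
    {Ω : Type} [MeasurableSpace Ω] (P : Measure Ω) [IsProbabilityMeasure P]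
    (q : ℕ → ℕ → ℕ → ℕ → ℝ) (hb : ∀ n, Bundle (q n) r (μ n))
    (B : ℕ → ℕ → Ω → ℕ) (hB : ∀ n, r ≤ n → IsMC P (q n) r 1 (B n)) :
    Tendsto (fun n : ℕ => (P {ω | a * n < (B n n ω : ℝ)}).toReal) atTop
      (nhds ((1 - a) ^ (r - 1))) := by
  have hs := sandwich hr a ha (fun n k => Wt (q n) r (n-r) k)
    (fun n hn k => Wt_nonneg (hb n) hr (n-r) k)
    (fun n hn => by
      have := Wt_sum (hb n) hr (n-r)
      have hidx : r + (n-r) + 1 = n + 1 := by omega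
      rw [hidx] at this
      exact this)
    (mom_tendsto r hr θ μ hμ hlim q hb)
  apply Filter.Tendsto.congr' _ hs
  filter_upwards [eventually_ge_atTop r] with n hn
  exact (prob_gt_eq_sum (hB n hn) (hb n) hr a n hn).symm

end CMF

/-- Fix `r ≥ 2` and `a ∈ (0,1)`, let `θ ∈ [0,∞)` and `(μ_n) ⊂ (0,1)`
with `n·μ_n → θ`.  For each `n ≥ r`, let `(B^{(n)}_s)_{s ≥ r}` be the single-site mutation
chain with mutation rate `μ_n` started from `B^{(n)}_r = 1` at population size `r`, and
let `(B̂^{(n)}_s)_{s ≥ r}` be the mutant-descendant chain with mutation rate `μ_n` started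
from `B̂^{(n)}_r = 1`.  Then `P[B^{(n)}_n > a·n] → (1−a)^{r−1}` and
`P[B̂^{(n)}_n > a·n] → (1−a)^{r−1}`. -/
theorem conditional_mutation_frequency
    (r : ℕ) (hr : 2 ≤ r) (a : ℝ) (ha : a ∈ Set.Ioo (0 : ℝ) 1)
    (θ : ℝ) (hθ : 0 ≤ θ) (μ : ℕ → ℝ) (hμ : ∀ n, μ n ∈ Set.Ioo (0 : ℝ) 1)
    (hlim : Tendsto (fun n : ℕ => (n : ℝ) * μ n) atTop (nhds θ))
    (Ω : Type) [MeasurableSpace Ω] (P : Measure Ω) [IsProbabilityMeasure P]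
    (B Bhat : ℕ → ℕ → Ω → ℕ)
    (hB : ∀ n, r ≤ n → IsMC P (singleSiteTrans (μ n)) r 1 (B n))
    (hBhat : ∀ n, r ≤ n → IsMC P (hatTrans (μ n)) r 1 (Bhat n)) :
    Tendsto (fun n : ℕ => (P {ω | a * n < (B n n ω : ℝ)}).toReal) atTop
      (nhds ((1 - a) ^ (r - 1)))
    ∧ Tendsto (fun n : ℕ => (P {ω | a * n < (Bhat n n ω : ℝ)}).toReal) atTop
      (nhds ((1 - a) ^ (r - 1))) := by
  constructor
  · apply CMF.final r hr a ha θ μ hμ hlim P (fun n => singleSiteTrans (μ n))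
      (fun n => CMF.sst_bundle (μ n) (hμ n) r hr) B hB
  · apply CMF.final r hr a ha θ μ hμ hlim P (fun n => hatTrans (μ n))
      (fun n => CMF.hat_bundle (μ n) (hμ n) r hr) Bhat hBhat
end

section
/- Let p ∈ (1/2, 1] and let (p_n)_{n≥1} ⊂ (0,1) satisfy p_n → p. For each n let (R^n_j)_{j≥1} be i.i.d. random variables with P[R^n_j = 1] = p_n and P[R^n_j = −1] = 1 − p_n, let the random walk start at 1, let ρ_n = min{k ≥ 1 : 1 + Σ_{j=1}^k R^n_j ∈ {0, n}}, and let D_n = Σ_{j=1}^{ρ_n} 1_{{R^n_j = −1}} be the number of downsteps before the walk hits {0,n}. Then there exists c > 0 such that P[D_n > n^{3/2}] ≤ c·n^{−3/2} for all sufficiently large n; consequently, if the walks for all n are defined on a common probability space, then almost surely D_n ≤ n^{3/2} for all but finitely many n. -/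
open MeasureTheory ProbabilityTheory Filter Set

/-- `manyDownsteps R n t ω` says that the random walk `k ↦ 1 + Σ_{j=1}^k R_j(ω)` makes
more than `t` downsteps (steps with `R_j = −1`) before first hitting the set `{0, n}`:
there is a time `k`, not later than the hitting time, by which more than `t` downsteps
have occurred. -/
def manyDownsteps {Ω : Type*} (R : ℕ → Ω → ℤ) (n : ℕ) (t : ℝ) (ω : Ω) : Prop :=
  ∃ k : ℕ,
    (∀ k' < k, (1 + ∑ j ∈ Finset.Icc 1 k', R j ω) ≠ 0 ∧
      (1 + ∑ j ∈ Finset.Icc 1 k', R j ω) ≠ (n : ℤ)) ∧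
    t < (((Finset.Icc 1 k).filter (fun j => R j ω = -1)).card : ℝ)

/-- Walk confinement: if the walk avoids {0,n} before time k, it stays in [1,n-1]. -/
lemma walk_confined (n : ℕ) (hn : 2 ≤ n) (f : ℕ → ℤ)
    (hf : ∀ j, 1 ≤ j → f j = 1 ∨ f j = -1) (k : ℕ)
    (h : ∀ k' < k, (1 + ∑ j ∈ Finset.Icc 1 k', f j) ≠ 0 ∧
      (1 + ∑ j ∈ Finset.Icc 1 k', f j) ≠ (n : ℤ)) :
    ∀ k' < k, 1 ≤ 1 + ∑ j ∈ Finset.Icc 1 k', f j ∧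
      1 + ∑ j ∈ Finset.Icc 1 k', f j ≤ (n : ℤ) - 1 := by
  intro k' hk'
  induction k' with
  | zero => simp; omega
  | succ i ih =>
    have hi : i < k := Nat.lt_of_succ_lt hk'
    obtain ⟨h1, h2⟩ := ih hi
    have hsum : ∑ j ∈ Finset.Icc 1 (i + 1), f j = (∑ j ∈ Finset.Icc 1 i, f j) + f (i + 1) := by
      rw [← Finset.Ico_add_one_right_eq_Icc, Finset.sum_Ico_succ_top (by omega), Finset.Ico_add_one_right_eq_Icc]
    obtain ⟨h3, h4⟩ := h (i + 1) hk'
    rcases hf (i + 1) (by omega) with hv | hv <;> rw [hsum, hv] at h3 h4 ⊢ <;> omega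

/-- Sum of ±1 steps in terms of the number of downsteps. -/
lemma sum_eq_sub_downsteps (m : ℕ) (f : ℕ → ℤ)
    (hf : ∀ j, 1 ≤ j → f j = 1 ∨ f j = -1) :
    ∑ j ∈ Finset.Icc 1 m, f j
      = (m : ℤ) - 2 * (((Finset.Icc 1 m).filter (fun j => f j = -1)).card : ℤ) := by
  rw [← Finset.sum_filter_add_sum_filter_not (Finset.Icc 1 m) (fun j => f j = -1) f]
  have e1 : ∑ j ∈ (Finset.Icc 1 m).filter (fun j => f j = -1), f j
      = -(((Finset.Icc 1 m).filter (fun j => f j = -1)).card : ℤ) := by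
    rw [Finset.sum_congr rfl (fun j hj => (Finset.mem_filter.mp hj).2)]
    simp
  have e2 : ∑ j ∈ (Finset.Icc 1 m).filter (fun j => ¬ f j = -1), f j
      = (((Finset.Icc 1 m).filter (fun j => ¬ f j = -1)).card : ℤ) := by
    have : ∀ j ∈ (Finset.Icc 1 m).filter (fun j => ¬ f j = -1), f j = 1 := by
      intro j hj
      obtain ⟨hj1, hj2⟩ := Finset.mem_filter.mp hj
      rcases hf j (Finset.mem_Icc.mp hj1).1 with hv | hv
      · exact hv
      · exact absurd hv hj2
    rw [Finset.sum_congr rfl this]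
    simp
  have e3 : ((Finset.Icc 1 m).filter (fun j => f j = -1)).card
      + ((Finset.Icc 1 m).filter (fun j => ¬ f j = -1)).card = m := by
    rw [Finset.card_filter_add_card_filter_not, Nat.card_Icc]
    omega
  rw [e1, e2]
  omega


lemma step_moments {Ω : Type} [MeasurableSpace Ω] (P : Measure Ω) [IsProbabilityMeasure P]
    (q : ℝ) (hq : q ∈ Set.Ioo (0 : ℝ) 1) (Z : Ω → ℤ) (hm : Measurable Z)
    (hv : ∀ ω, Z ω = 1 ∨ Z ω = -1)
    (hl : P {ω | Z ω = 1} = ENNReal.ofReal q) :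
    MemLp (fun ω => ((Z ω : ℤ) : ℝ)) 2 P
    ∧ (∫ ω, ((Z ω : ℤ) : ℝ) ∂P) = 2 * q - 1
    ∧ variance (fun ω => ((Z ω : ℤ) : ℝ)) P ≤ 1 := by
  have hmR : Measurable (fun ω => ((Z ω : ℤ) : ℝ)) :=
    (measurable_from_top (f := (Int.cast : ℤ → ℝ))).comp hm
  have hbd : ∀ ω, ‖((Z ω : ℤ) : ℝ)‖ ≤ 1 := by
    intro ω; rcases hv ω with h | h <;> simp [h]
  have hmem : MemLp (fun ω => ((Z ω : ℤ) : ℝ)) 2 P :=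
    MemLp.of_bound hmR.aestronglyMeasurable 1 (Filter.Eventually.of_forall hbd)
  have hA : MeasurableSet {ω | Z ω = 1} := hm (measurableSet_singleton 1)
  have hrepr : (fun ω => ((Z ω : ℤ) : ℝ))
      = fun ω => {ω | Z ω = 1}.indicator (fun _ => (2 : ℝ)) ω + (-1 : ℝ) := by
    funext ω
    rcases hv ω with h | h
    · have : ω ∈ {ω | Z ω = 1} := h
      simp [h, Set.indicator_of_mem this]; norm_num
    · have : ω ∉ {ω | Z ω = 1} := by simp [Set.mem_setOf_eq, h]
      simp [h, Set.indicator_of_notMem this]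
  have hint : (∫ ω, ((Z ω : ℤ) : ℝ) ∂P) = 2 * q - 1 := by
    rw [hrepr]
    rw [integral_add ((integrable_const (2:ℝ)).indicator hA) (integrable_const (-1))]
    rw [integral_indicator_const _ hA, integral_const]
    simp [hl, ENNReal.toReal_ofReal hq.1.le]
    rw [measureReal_def, hl, ENNReal.toReal_ofReal hq.1.le]
    ring
  refine ⟨hmem, hint, ?_⟩
  have hvar : variance (fun ω => ((Z ω : ℤ) : ℝ)) P
      = (∫ ω, ((Z ω : ℤ) : ℝ) ^ 2 ∂P) - (∫ ω, ((Z ω : ℤ) : ℝ) ∂P) ^ 2 := by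
    rw [variance_eq_sub hmem]
    rfl
  have hsq : (∫ ω, ((Z ω : ℤ) : ℝ) ^ 2 ∂P) = 1 := by
    have : (fun ω => ((Z ω : ℤ) : ℝ) ^ 2) = fun _ => (1 : ℝ) := by
      funext ω; rcases hv ω with h | h <;> simp [h]
    rw [this, integral_const]; simp
  rw [hvar, hsq]
  nlinarith [sq_nonneg ((∫ ω, ((Z ω : ℤ) : ℝ) ∂P))]



set_option maxHeartbeats 1000000 in
/-- The key single-`n` Chebyshev bound. -/
lemma key_bound {Ω : Type} [MeasurableSpace Ω] (P : Measure Ω) [IsProbabilityMeasure P]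
    (n : ℕ) (q ε : ℝ) (hq : q ∈ Set.Ioo (0 : ℝ) 1) (hε0 : 0 < ε)
    (h1 : ε ≤ 2 * q - 1) (h2 : (2:ℝ)/ε ≤ (n:ℝ) ^ ((1:ℝ)/2)) (h3 : 2 ≤ n)
    (Rn : ℕ → Ω → ℤ)
    (hmeas : ∀ j, 1 ≤ j → Measurable (Rn j))
    (hval : ∀ j ω, 1 ≤ j → (Rn j ω = 1 ∨ Rn j ω = -1))
    (hlaw : ∀ j, 1 ≤ j → P {ω | Rn j ω = 1} = ENNReal.ofReal q)
    (hIndep : iIndepFun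
      (fun j : {j : ℕ // 1 ≤ j} => Rn j) P) :
    P {ω | manyDownsteps Rn n ((n : ℝ) ^ ((3 : ℝ) / 2)) ω}
      ≤ ENNReal.ofReal ((4 / ε ^ 2) * (n : ℝ) ^ (-(3 : ℝ) / 2)) := by
    have hn0 : (0:ℝ) < n := by positivity
    set t : ℝ := (n : ℝ) ^ ((3 : ℝ) / 2) with htdef
    have ht0 : 0 < t := Real.rpow_pos_of_pos hn0 _
    set m : ℕ := ⌈t⌉₊ with hmdef
    have hm1 : t ≤ (m:ℝ) := Nat.le_ceil t
    have hm2 : (m:ℝ) < t + 1 := Nat.ceil_lt_add_one ht0.le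
    have hm0 : (0:ℝ) < (m:ℝ) := lt_of_lt_of_le ht0 hm1
    have htmul : t = (n:ℝ) * (n:ℝ) ^ ((1:ℝ)/2) := by
      rw [htdef, show (3:ℝ)/2 = 1 + 1/2 by norm_num, Real.rpow_add hn0, Real.rpow_one]
    have hnt : (n:ℝ) ≤ (ε/2) * t := by
      rw [htmul]
      have e0 : (ε/2) * (2/ε) = 1 := by field_simp
      have e1 : (1:ℝ) ≤ (ε/2) * (n:ℝ) ^ ((1:ℝ)/2) := by nlinarith
      nlinarith [mul_le_mul_of_nonneg_left e1 hn0.le]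
    -- the sum variable
    set X : Ω → ℝ := fun ω => ∑ j ∈ Finset.Icc 1 m, ((Rn j ω : ℤ) : ℝ) with hXdef
    have hstep : ∀ j ∈ Finset.Icc 1 m,
        MemLp (fun ω => ((Rn j ω : ℤ) : ℝ)) 2 P
        ∧ (∫ ω, ((Rn j ω : ℤ) : ℝ) ∂P) = 2 * q - 1
        ∧ variance (fun ω => ((Rn j ω : ℤ) : ℝ)) P ≤ 1 := by
      intro j hj
      have h1j : 1 ≤ j := (Finset.mem_Icc.mp hj).1
      exact step_moments P (q) (hq) (Rn j) (hmeas j h1j)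
        (fun ω => hval j ω h1j) (hlaw j h1j)
    have hLp : ∀ j ∈ Finset.Icc 1 m, MemLp (fun ω => ((Rn j ω : ℤ) : ℝ)) 2 P :=
      fun j hj => (hstep j hj).1
    have hXLp : MemLp X 2 P := by
      rw [hXdef, ← Finset.sum_fn]
      exact memLp_finset_sum' _ hLp
    have hEX : (∫ ω, X ω ∂P) = (m:ℝ) * (2 * q - 1) := by
      rw [hXdef]
      rw [integral_finset_sum _ (fun j hj => ((hLp j hj).integrable one_le_two))]
      rw [Finset.sum_congr rfl (fun j hj => (hstep j hj).2.1)]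
      simp [Nat.card_Icc]
      ring
    have hVar : variance X P ≤ (m:ℝ) := by
      have hpair : Set.Pairwise ↑(Finset.Icc 1 m)
          (fun i j => IndepFun (fun ω => ((Rn i ω : ℤ) : ℝ))
            (fun ω => ((Rn j ω : ℤ) : ℝ)) P) := by
        intro i hi j hj hij
        have h1i : 1 ≤ i := (Finset.mem_Icc.mp (Finset.mem_coe.mp hi)).1
        have h1j : 1 ≤ j := (Finset.mem_Icc.mp (Finset.mem_coe.mp hj)).1
        have hne : (⟨i, h1i⟩ : {j : ℕ // 1 ≤ j}) ≠ ⟨j, h1j⟩ :=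
          fun h => hij (congrArg Subtype.val h)
        have hind := hIndep.indepFun hne
        exact hind.comp (measurable_from_top (f := (Int.cast : ℤ → ℝ)))
          (measurable_from_top (f := (Int.cast : ℤ → ℝ)))
      rw [hXdef, ← Finset.sum_fn, IndepFun.variance_sum hLp hpair]
      calc ∑ j ∈ Finset.Icc 1 m, variance (fun ω => ((Rn j ω : ℤ) : ℝ)) P
          ≤ ∑ j ∈ Finset.Icc 1 m, (1:ℝ) :=
            Finset.sum_le_sum (fun j hj => (hstep j hj).2.2)
        _ = (m:ℝ) := by simp [Nat.card_Icc]
    -- containment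
    set c₀ : ℝ := (m:ℝ) * (2 * q - 1) - n with hc₀def
    have hc₀ : (ε/2) * (m:ℝ) ≤ c₀ := by
      have h1' : ε * (m:ℝ) ≤ (m:ℝ) * (2 * q - 1) := by nlinarith
      have h2' : (ε/2) * t ≤ (ε/2) * (m:ℝ) := by nlinarith
      simp only [hc₀def]
      linarith
    have hc₀pos : 0 < c₀ := lt_of_lt_of_le (by positivity) hc₀
    have hsub : {ω | manyDownsteps Rn n ((n : ℝ) ^ ((3 : ℝ) / 2)) ω} ⊆ {ω | c₀ ≤ |X ω - ∫ ω', X ω' ∂P|} := by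
      intro ω hω
      obtain ⟨k, hk1, hk2⟩ := hω
      have hXle : X ω ≤ (n:ℝ) := by
        by_cases hkm : k ≤ m
        · -- many downsteps already by time m
          have hcard : ((Finset.Icc 1 k).filter (fun j => Rn j ω = -1)).card
              ≤ ((Finset.Icc 1 m).filter (fun j => Rn j ω = -1)).card :=
            Finset.card_le_card (Finset.filter_subset_filter _
              (Finset.Icc_subset_Icc_right hkm))
          have hsumeq := sum_eq_sub_downsteps m (fun j => Rn j ω)
            (fun j hj => hval j ω hj)
          have hXeq : X ω = (m:ℝ)
              - 2 * (((Finset.Icc 1 m).filter (fun j => Rn j ω = -1)).card : ℝ) := by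
            rw [hXdef]
            push_cast
            exact_mod_cast congrArg (Int.cast : ℤ → ℝ) hsumeq
          have hcR : ((( Finset.Icc 1 k).filter (fun j => Rn j ω = -1)).card : ℝ)
              ≤ (((Finset.Icc 1 m).filter (fun j => Rn j ω = -1)).card : ℝ) := by
            exact_mod_cast hcard
          have hn2 : (2:ℝ) ≤ (n:ℝ) := by exact_mod_cast h3
          have ht2 : (1:ℝ) ≤ t := by
            have h1n : (1:ℝ) ≤ (n:ℝ) := by exact_mod_cast le_trans one_le_two h3
            have := Real.rpow_le_rpow_of_exponent_le h1n
              (show (0:ℝ) ≤ 3/2 by norm_num)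
            rw [htdef]
            simpa using this
          linarith
        · -- the walk is still confined at time m
          push_neg at hkm
          have hconf := walk_confined n h3 (fun j => Rn j ω)
            (fun j hj => hval j ω hj) k hk1 m hkm
          have hZ : (1:ℤ) + ∑ j ∈ Finset.Icc 1 m, Rn j ω ≤ (n:ℤ) - 1 := hconf.2
          have : ((∑ j ∈ Finset.Icc 1 m, Rn j ω : ℤ) : ℝ) ≤ (n:ℝ) - 2 := by
            exact_mod_cast (by omega : (∑ j ∈ Finset.Icc 1 m, Rn j ω : ℤ) ≤ (n:ℤ) - 2)
          rw [hXdef]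
          push_cast at this ⊢
          linarith
      have : c₀ ≤ (∫ ω', X ω' ∂P) - X ω := by
        rw [hEX]; simp only [hc₀def]; linarith
      calc c₀ ≤ (∫ ω', X ω' ∂P) - X ω := this
        _ = -(X ω - ∫ ω', X ω' ∂P) := by ring
        _ ≤ |X ω - ∫ ω', X ω' ∂P| := neg_le_abs _
    -- Chebyshev
    have hcheb := meas_ge_le_variance_div_sq hXLp hc₀pos
    refine le_trans (measure_mono hsub) (le_trans hcheb (ENNReal.ofReal_le_ofReal ?_))
    have hq1 : variance X P / c₀ ^ 2 ≤ (m:ℝ) / ((ε/2) * (m:ℝ)) ^ 2 := by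
      exact div_le_div₀ hm0.le hVar (by positivity)
        (pow_le_pow_left₀ (by positivity) hc₀ 2)
    have hq2 : (m:ℝ) / ((ε/2) * (m:ℝ)) ^ 2 = 4 / (ε^2 * (m:ℝ)) := by
      field_simp
      ring
    have hq3 : (4:ℝ) / (ε^2 * (m:ℝ)) ≤ 4 / (ε^2 * t) := by
      gcongr
    have hq4 : (4:ℝ) / (ε^2 * t) = (4/ε^2) * (n : ℝ) ^ (-(3 : ℝ) / 2) := by
      rw [show (-(3:ℝ)/2) = -((3:ℝ)/2) by ring, Real.rpow_neg hn0.le, ← htdef, show (4:ℝ)/ε^2 = 4/ε^2 from rfl]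
      field_simp
    calc variance X P / c₀ ^ 2 ≤ (m:ℝ) / ((ε/2) * (m:ℝ)) ^ 2 := hq1
      _ = 4 / (ε^2 * (m:ℝ)) := hq2
      _ ≤ 4 / (ε^2 * t) := hq3
      _ = (4/ε^2) * (n : ℝ) ^ (-(3 : ℝ) / 2) := hq4

set_option maxHeartbeats 1000000 in
/-- Let `p ∈ (1/2, 1]` and `(p_n) ⊂ (0,1)` with `p_n → p`.  For each
`n` let `(R^n_j)_{j ≥ 1}` be i.i.d. `±1`-valued random variables with
`P[R^n_j = 1] = p_n`, let the walk start at `1`, let `ρ_n` be the first hitting time of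
`{0, n}`, and let `D_n` be the number of downsteps before the walk hits `{0,n}`.  Then
there is `c > 0` with `P[D_n > n^{3/2}] ≤ c·n^{−3/2}` for all sufficiently large `n`;
consequently, on a common probability space, almost surely `D_n ≤ n^{3/2}` for all but
finitely many `n`. -/
theorem downstep_count_bound
    (p : ℝ) (hp : p ∈ Set.Ioc (1 / 2 : ℝ) 1)
    (pn : ℕ → ℝ) (hpn : ∀ n, pn n ∈ Set.Ioo (0 : ℝ) 1)
    (hlim : Tendsto pn atTop (nhds p))
    (Ω : Type) [MeasurableSpace Ω] (P : Measure Ω) [IsProbabilityMeasure P]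
    (R : ℕ → ℕ → Ω → ℤ)
    (hmeas : ∀ n j, 1 ≤ j → Measurable (R n j))
    (hval : ∀ n j ω, 1 ≤ j → (R n j ω = 1 ∨ R n j ω = -1))
    (hlaw : ∀ n j, 1 ≤ j → P {ω | R n j ω = 1} = ENNReal.ofReal (pn n))
    (hIndep : ∀ n, iIndepFun
      (fun j : {j : ℕ // 1 ≤ j} => R n j) P) :
    (∃ c : ℝ, 0 < c ∧ ∀ᶠ n : ℕ in atTop,
        (P {ω | manyDownsteps (R n) n ((n : ℝ) ^ ((3 : ℝ) / 2)) ω}).toReal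
          ≤ c * (n : ℝ) ^ (-(3 : ℝ) / 2))
    ∧ ∀ᵐ ω ∂P, ∀ᶠ n : ℕ in atTop,
        ¬ manyDownsteps (R n) n ((n : ℝ) ^ ((3 : ℝ) / 2)) ω := by
  obtain ⟨hp1, hp2⟩ := hp
  obtain ⟨ε, hεdef⟩ : ∃ e : ℝ, e = p - 1/2 := ⟨_, rfl⟩
  have hε0 : 0 < ε := by rw [hεdef]; linarith
  set s : ℕ → Set Ω :=
    fun n => {ω | manyDownsteps (R n) n ((n : ℝ) ^ ((3 : ℝ) / 2)) ω} with hsdef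
  have hev1 : ∀ᶠ n in atTop, ε ≤ 2 * pn n - 1 := by
    have h := hlim.eventually_const_lt (show p - ε/2 < p by linarith)
    filter_upwards [h] with n hn
    rw [hεdef] at hn ⊢
    linarith
  have hev2 : ∀ᶠ n : ℕ in atTop, (2:ℝ)/ε ≤ (n:ℝ) ^ ((1:ℝ)/2) :=
    ((tendsto_rpow_atTop (by norm_num : (0:ℝ) < 1/2)).comp
      tendsto_natCast_atTop_atTop).eventually_ge_atTop _
  have hev3 : ∀ᶠ n : ℕ in atTop, 2 ≤ n := eventually_ge_atTop 2
  have key : ∀ᶠ n : ℕ in atTop,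
      P (s n) ≤ ENNReal.ofReal ((4 / ε ^ 2) * (n : ℝ) ^ (-(3 : ℝ) / 2)) := by
    filter_upwards [hev1, hev2, hev3] with n h1 h2 h3
    exact key_bound P n (pn n) ε (hpn n) hε0 h1 h2 h3 (R n)
      (hmeas n) (fun j ω hj => hval n j ω hj) (hlaw n) (hIndep n)
  constructor
  · refine ⟨4 / ε ^ 2, by positivity, ?_⟩
    filter_upwards [key] with n hn
    refine le_trans (ENNReal.toReal_mono ENNReal.ofReal_ne_top hn) ?_
    rw [ENNReal.toReal_ofReal (by positivity)]
  · -- Borel–Cantelli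
    obtain ⟨N, hN'⟩ := eventually_atTop.mp key
    have hN : ∀ n ≥ N, P (s n)
        ≤ ENNReal.ofReal ((4 / ε ^ 2) * (n : ℝ) ^ (-(3 : ℝ) / 2)) := hN'
    have hsummable : Summable (fun n : ℕ => (4 / ε ^ 2) * (n:ℝ) ^ (-(3:ℝ)/2)) :=
      (Real.summable_nat_rpow.mpr (by norm_num : (-(3:ℝ)/2) < -1)).mul_left _
    set v : ℕ → ENNReal := fun n => if n < N then 1 else 0 with hv
    set w : ℕ → ENNReal := fun n => ENNReal.ofReal ((4 / ε ^ 2) * (n:ℝ) ^ (-(3:ℝ)/2))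
      with hw
    have htsum : (∑' n, P (s n)) ≠ ⊤ := by
      have hb : ∀ n, P (s n) ≤ v n + w n := by
        intro n
        by_cases hn : n < N
        · calc P (s n) ≤ 1 := prob_le_one
            _ ≤ v n + w n := by simp [hv, hn]
        · calc P (s n) ≤ w n := hN n (by omega)
            _ ≤ v n + w n := le_add_self
      have h1 : (∑' n, v n) ≤ (N : ENNReal) := by
        have : (∑' n, v n) = ∑ n ∈ Finset.range N, v n :=
          tsum_eq_sum (fun n hn => by simp [hv, Finset.mem_range.not.mp hn])
        rw [this]
        calc ∑ n ∈ Finset.range N, v n ≤ ∑ _n ∈ Finset.range N, 1 :=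
              Finset.sum_le_sum (fun i _ => by simp [hv]; split <;> simp)
          _ = (N : ENNReal) := by simp
      have h2 : (∑' n, w n) ≠ ⊤ := by
        rw [hw, ← ENNReal.ofReal_tsum_of_nonneg (fun n => by positivity) hsummable]
        exact ENNReal.ofReal_ne_top
      have hle : (∑' n, P (s n)) ≤ (∑' n, v n) + ∑' n, w n := by
        calc (∑' n, P (s n)) ≤ ∑' n, (v n + w n) := ENNReal.tsum_le_tsum hb
          _ = (∑' n, v n) + ∑' n, w n := ENNReal.tsum_add
      have hvne : (∑' n, v n) ≠ ⊤ :=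
        (lt_of_le_of_lt h1 (ENNReal.natCast_lt_top N)).ne
      exact ne_top_of_le_ne_top (ENNReal.add_ne_top.mpr ⟨hvne, h2⟩) hle
    have hae := MeasureTheory.ae_eventually_notMem htsum
    filter_upwards [hae] with ω hω
    filter_upwards [hω] with n hn
    exact hn
end
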